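/- arXiv:1211.0135 — 6 statements merged into one kernel-verified Lean document; each statement's English description precedes it below -/
import Mathlib

section
/- Let ρ > 0 and let the noise spectral density S_ν on ℝ² equal 1 on [−aρ, aρ] × [−aρ, aρ] and 0 elsewhere, where a is a positive odd integer. Then the static-sampling noise variance σ²_stat = (1/4π²) ∫_Ω Σ_{n∈ℤ²} S_ν(ω − 2nρ) dω equals ρ²a²/π², and the mobile-sampling noise variance σ²_m1 = (1/4π²) ∫_Ω Σ_{n∈ℤ} S_ν(ω − (0, 2nρ)) dω equals ρ²a/π², where Ω = [−ρ, ρ] × [−ρ, ρ]. In particular σ²_stat / σ²_m1 = a. -/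
open MeasureTheory Real

lemma aux_mem_iff (ρ : ℝ) (hρ : 0 < ρ) (k : ℕ) (y : ℝ) (hy : |y| < ρ) (n : ℤ) :
    |y - 2 * n * ρ| ≤ ((2 * k + 1 : ℕ) : ℝ) * ρ ↔ n ∈ Finset.Icc (-(k : ℤ)) k := by
  rw [abs_le] at *
  rw [abs_lt] at hy
  rw [Finset.mem_Icc]
  push_cast
  constructor
  · rintro ⟨h1, h2⟩
    constructor
    · have : (-(k:ℝ) - 1) < n := by nlinarith [hy.1, hy.2]
      have : (-(k:ℤ) - 1) < n := by exact_mod_cast this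
      omega
    · have : (n : ℝ) < (k : ℝ) + 1 := by nlinarith [hy.1, hy.2]
      have : n < (k:ℤ) + 1 := by exact_mod_cast this
      omega
  · rintro ⟨h1, h2⟩
    have h1' : -(k:ℝ) ≤ n := by exact_mod_cast h1
    have h2' : (n:ℝ) ≤ k := by exact_mod_cast h2
    constructor <;> nlinarith [hy.1, hy.2]

lemma aux_card (k : ℕ) : (Finset.Icc (-(k : ℤ)) k).card = 2 * k + 1 := by
  rw [Int.card_Icc]
  omega

lemma aux_tsum_mobile (ρ : ℝ) (hρ : 0 < ρ) (k : ℕ) (y : ℝ) (hy : |y| < ρ) :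
    (∑' n : ℤ, (if |y - 2 * n * ρ| ≤ ((2 * k + 1 : ℕ) : ℝ) * ρ then (1:ℝ) else 0))
      = ((2 * k + 1 : ℕ) : ℝ) := by
  rw [tsum_eq_sum (s := Finset.Icc (-(k : ℤ)) k)
    (fun n hn => by rw [if_neg]; rw [aux_mem_iff ρ hρ k y hy]; exact hn)]
  rw [Finset.sum_congr rfl (fun n hn => if_pos ((aux_mem_iff ρ hρ k y hy n).2 hn))]
  rw [Finset.sum_const, aux_card, nsmul_eq_mul]
  push_cast
  ring

lemma aux_tsum_static (ρ : ℝ) (hρ : 0 < ρ) (k : ℕ) (x y : ℝ) (hx : |x| < ρ) (hy : |y| < ρ) :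
    (∑' n : ℤ × ℤ, (if |x - 2 * n.1 * ρ| ≤ ((2 * k + 1 : ℕ) : ℝ) * ρ ∧
        |y - 2 * n.2 * ρ| ≤ ((2 * k + 1 : ℕ) : ℝ) * ρ then (1:ℝ) else 0))
      = ((2 * k + 1 : ℕ) : ℝ) ^ 2 := by
  rw [tsum_eq_sum (s := Finset.Icc (-(k : ℤ)) k ×ˢ Finset.Icc (-(k : ℤ)) k)
    (fun n hn => by
      rw [if_neg]
      rw [Finset.mem_product, not_and_or] at hn
      rcases hn with hn | hn
      · rw [not_and_or]; left; rw [aux_mem_iff ρ hρ k x hx]; exact hn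
      · rw [not_and_or]; right; rw [aux_mem_iff ρ hρ k y hy]; exact hn)]
  have hs : ∀ n ∈ Finset.Icc (-(k : ℤ)) k ×ˢ Finset.Icc (-(k : ℤ)) k,
      (if |x - 2 * (n : ℤ × ℤ).1 * ρ| ≤ ((2 * k + 1 : ℕ) : ℝ) * ρ ∧
        |y - 2 * n.2 * ρ| ≤ ((2 * k + 1 : ℕ) : ℝ) * ρ then (1:ℝ) else 0) = 1 := by
    intro n hn
    rw [Finset.mem_product] at hn
    exact if_pos ⟨(aux_mem_iff ρ hρ k x hx n.1).2 hn.1, (aux_mem_iff ρ hρ k y hy n.2).2 hn.2⟩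
  rw [Finset.sum_congr rfl hs]
  rw [Finset.sum_const, Finset.card_product, aux_card, nsmul_eq_mul]
  push_cast
  ring

lemma aux_set_ae (ρ : ℝ) (hρ : 0 < ρ) :
    (Set.Icc (-ρ) ρ ×ˢ Set.Icc (-ρ) ρ : Set (ℝ × ℝ))
      =ᵐ[volume] (Set.Ioo (-ρ) ρ ×ˢ Set.Ioo (-ρ) ρ : Set (ℝ × ℝ)) := by
  have hle : (-ρ) ≤ ρ := by linarith
  rw [MeasureTheory.ae_eq_set]
  constructor
  · have hsub : (Set.Icc (-ρ) ρ ×ˢ Set.Icc (-ρ) ρ : Set (ℝ × ℝ)) \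
        (Set.Ioo (-ρ) ρ ×ˢ Set.Ioo (-ρ) ρ) ⊆
        ((Set.Icc (-ρ) ρ \ Set.Ioo (-ρ) ρ) ×ˢ Set.Icc (-ρ) ρ) ∪
        (Set.Icc (-ρ) ρ ×ˢ (Set.Icc (-ρ) ρ \ Set.Ioo (-ρ) ρ)) := by
      rintro ⟨x, y⟩ ⟨⟨hx, hy⟩, hn⟩
      rw [Set.mem_prod] at hn
      push_neg at hn
      by_cases hx' : x ∈ Set.Ioo (-ρ) ρ
      · exact Or.inr ⟨hx, hy, hn hx'⟩
      · exact Or.inl ⟨⟨hx, hx'⟩, hy⟩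
    refine measure_mono_null hsub (measure_union_null ?_ ?_)
    · rw [Measure.volume_eq_prod, Measure.prod_prod]
      have : volume (Set.Icc (-ρ) ρ \ Set.Ioo (-ρ) ρ) = 0 := by
        rw [Set.Icc_diff_Ioo_same hle]
        exact ((Set.finite_singleton _).insert _).measure_zero volume
      rw [this, zero_mul]
    · rw [Measure.volume_eq_prod, Measure.prod_prod]
      have : volume (Set.Icc (-ρ) ρ \ Set.Ioo (-ρ) ρ) = 0 := by
        rw [Set.Icc_diff_Ioo_same hle]
        exact ((Set.finite_singleton _).insert _).measure_zero volume
      rw [this, mul_zero]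
  · have : (Set.Ioo (-ρ) ρ ×ˢ Set.Ioo (-ρ) ρ : Set (ℝ × ℝ)) \
        (Set.Icc (-ρ) ρ ×ˢ Set.Icc (-ρ) ρ) = ∅ := by
      rw [Set.diff_eq_empty]
      exact Set.prod_mono Set.Ioo_subset_Icc_self Set.Ioo_subset_Icc_self
    rw [this]
    simp

lemma aux_vol (ρ : ℝ) (hρ : 0 < ρ) :
    (volume (Set.Ioo (-ρ) ρ ×ˢ Set.Ioo (-ρ) ρ : Set (ℝ × ℝ))).toReal = 4 * ρ ^ 2 := by
  rw [Measure.volume_eq_prod, Measure.prod_prod, Real.volume_Ioo,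
    ← ENNReal.ofReal_mul (by linarith)]
  rw [ENNReal.toReal_ofReal (by nlinarith)]
  ring

/-- Proposition 1: for noise spectral density equal to the indicator of
`[−aρ,aρ]²` with `a` a positive odd integer, the static-sampling noise variance equals
`ρ²a²/π²`, the mobile-sampling noise variance equals `ρ²a/π²`, and their ratio is `a`. -/
theorem variance_ratio_indicator_noise (ρ : ℝ) (hρ : 0 < ρ) (a : ℕ) (ha : Odd a)
    (hapos : 0 < a)
    (Sν : ℝ × ℝ → ℝ)
    (hSν : ∀ ω : ℝ × ℝ, Sν ω = if |ω.1| ≤ (a : ℝ) * ρ ∧ |ω.2| ≤ (a : ℝ) * ρ then 1 else 0) :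
    (1 / (4 * π ^ 2)) * (∫ ω in (Set.Icc (-ρ) ρ ×ˢ Set.Icc (-ρ) ρ),
        ∑' n : ℤ × ℤ, Sν (ω.1 - 2 * n.1 * ρ, ω.2 - 2 * n.2 * ρ)) = ρ ^ 2 * (a : ℝ) ^ 2 / π ^ 2
    ∧ (1 / (4 * π ^ 2)) * (∫ ω in (Set.Icc (-ρ) ρ ×ˢ Set.Icc (-ρ) ρ),
        ∑' n : ℤ, Sν (ω.1, ω.2 - 2 * n * ρ)) = ρ ^ 2 * (a : ℝ) / π ^ 2
    ∧ (ρ ^ 2 * (a : ℝ) ^ 2 / π ^ 2) / (ρ ^ 2 * (a : ℝ) / π ^ 2) = (a : ℝ) := by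
  obtain ⟨k, hk⟩ := ha
  have hk' : a = 2 * k + 1 := hk
  have hπ : (π : ℝ) ≠ 0 := Real.pi_ne_zero
  have hmeas : MeasurableSet (Set.Ioo (-ρ) ρ ×ˢ Set.Ioo (-ρ) ρ : Set (ℝ × ℝ)) :=
    measurableSet_Ioo.prod measurableSet_Ioo
  refine ⟨?_, ?_, ?_⟩
  · rw [setIntegral_congr_set (aux_set_ae ρ hρ)]
    rw [setIntegral_congr_fun hmeas (g := fun _ => ((a : ℝ) ^ 2)) (fun ω hω => by
      rw [Set.mem_prod] at hω
      have hx : |ω.1| < ρ := abs_lt.2 ⟨hω.1.1, hω.1.2⟩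
      have hy : |ω.2| < ρ := abs_lt.2 ⟨hω.2.1, hω.2.2⟩
      simp only [hSν]
      subst hk'
      exact aux_tsum_static ρ hρ k ω.1 ω.2 hx hy)]
    rw [setIntegral_const, smul_eq_mul, measureReal_def, aux_vol ρ hρ]
    field_simp
  · rw [setIntegral_congr_set (aux_set_ae ρ hρ)]
    rw [setIntegral_congr_fun hmeas (g := fun _ => ((a : ℝ))) (fun ω hω => by
      rw [Set.mem_prod] at hω
      have hx : |ω.1| < ρ := abs_lt.2 ⟨hω.1.1, hω.1.2⟩
      have hy : |ω.2| < ρ := abs_lt.2 ⟨hω.2.1, hω.2.2⟩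
      have hx' : |ω.1| ≤ (a : ℝ) * ρ := by
        have : (1 : ℝ) ≤ (a : ℝ) := by exact_mod_cast hapos
        nlinarith [abs_nonneg ω.1]
      simp only [hSν]
      have : ∀ n : ℤ, (if |(ω.1, ω.2 - 2 * ↑n * ρ).1| ≤ (a:ℝ) * ρ ∧
          |(ω.1, ω.2 - 2 * ↑n * ρ).2| ≤ (a:ℝ) * ρ then (1:ℝ) else 0)
          = (if |ω.2 - 2 * n * ρ| ≤ (a:ℝ) * ρ then (1:ℝ) else 0) := by
        intro n
        exact if_congr (and_iff_right hx') rfl rfl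
      rw [tsum_congr this]
      subst hk'
      exact aux_tsum_mobile ρ hρ k ω.2 hy)]
    rw [setIntegral_const, smul_eq_mul, measureReal_def, aux_vol ρ hρ]
    field_simp
  · have ha0 : (a : ℝ) ≠ 0 := by positivity
    have hρ0 : ρ ≠ 0 := ne_of_gt hρ
    field_simp
end

section
/- Under the assumptions of the previous proposition but for arbitrary real a ≥ 1, the static sampling noise variance σ²_stat grows as Θ(a²) and the mobile sampling noise variance σ²_m1 grows as Θ(a) as a → ∞. -/
open MeasureTheory Real


lemma aux_mem (ρ a t : ℝ) (hρ : 0 < ρ) (ha : 1 ≤ a) (ht : |t| ≤ ρ) (n : ℤ)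
    (h : |t - 2 * (n:ℝ) * ρ| ≤ a * ρ) : n ∈ Finset.Icc (-⌈a⌉) ⌈a⌉ := by
  rw [Finset.mem_Icc]
  have habs := abs_le.mp ht
  have habs2 := abs_le.mp h
  have hca := Int.le_ceil a
  constructor
  · have : -(⌈a⌉:ℝ) ≤ (n:ℝ) := by nlinarith
    exact_mod_cast this
  · have : (n:ℝ) ≤ (⌈a⌉:ℝ) := by nlinarith
    exact_mod_cast this

lemma aux_count (ρ a t : ℝ) (hρ : 0 < ρ) (ha : 1 ≤ a) (ht : |t| ≤ ρ) :
    a / 2 ≤ (∑ n ∈ Finset.Icc (-⌈a⌉) ⌈a⌉, if |t - 2 * (n : ℝ) * ρ| ≤ a * ρ then (1:ℝ) else 0)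
      ∧ (∑ n ∈ Finset.Icc (-⌈a⌉) ⌈a⌉, if |t - 2 * (n : ℝ) * ρ| ≤ a * ρ then (1:ℝ) else 0)
        ≤ 2 * a := by
  have h2ρ : (0:ℝ) < 2 * ρ := by linarith
  have habs := abs_le.mp ht
  set l : ℝ := (t - a * ρ) / (2 * ρ) with hl
  set u : ℝ := (t + a * ρ) / (2 * ρ) with hu
  have hul : u - l = a := by
    rw [hl, hu, div_sub_div_same]
    field_simp
    ring
  have hcond : ∀ n : ℤ, (|t - 2 * (n:ℝ) * ρ| ≤ a * ρ) ↔ (⌈l⌉ ≤ n ∧ n ≤ ⌊u⌋) := by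
    intro n
    rw [abs_le, Int.ceil_le, Int.le_floor]
    constructor
    · rintro ⟨h1, h2⟩
      constructor
      · rw [hl, div_le_iff₀ h2ρ]; nlinarith
      · rw [hu, le_div_iff₀ h2ρ]; nlinarith
    · rintro ⟨h1, h2⟩
      rw [hl, div_le_iff₀ h2ρ] at h1
      rw [hu, le_div_iff₀ h2ρ] at h2
      constructor <;> nlinarith
  have hfilter : (Finset.Icc (-⌈a⌉) ⌈a⌉).filter (fun n : ℤ => |t - 2 * (n:ℝ) * ρ| ≤ a * ρ)
      = Finset.Icc ⌈l⌉ ⌊u⌋ := by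
    ext n
    simp only [Finset.mem_filter, Finset.mem_Icc, hcond n]
    constructor
    · exact fun h => h.2
    · intro h
      exact ⟨Finset.mem_Icc.mp (aux_mem ρ a t hρ ha ht n ((hcond n).mpr h)), h⟩
  have hsum : (∑ n ∈ Finset.Icc (-⌈a⌉) ⌈a⌉, if |t - 2 * (n:ℝ) * ρ| ≤ a * ρ then (1:ℝ) else 0)
      = ((Finset.Icc ⌈l⌉ ⌊u⌋).card : ℝ) := by
    rw [Finset.sum_boole, hfilter]
  have hcu : l ≤ (⌈l⌉:ℝ) := Int.le_ceil l
  have hcu' : (⌈l⌉:ℝ) < l + 1 := Int.ceil_lt_add_one l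
  have hfl' : (⌊u⌋:ℝ) ≤ u := Int.floor_le u
  have hfl : u - 1 < (⌊u⌋:ℝ) := Int.sub_one_lt_floor u
  have hcl : ⌈l⌉ ≤ ⌊u⌋ := by
    rw [Int.le_floor]
    linarith
  have hcard : ((Finset.Icc ⌈l⌉ ⌊u⌋).card : ℝ) = (⌊u⌋:ℝ) + 1 - (⌈l⌉:ℝ) := by
    have h0 : (0:ℤ) ≤ ⌊u⌋ + 1 - ⌈l⌉ := by omega
    have h1 : ((Finset.Icc ⌈l⌉ ⌊u⌋).card : ℤ) = ⌊u⌋ + 1 - ⌈l⌉ := by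
      rw [Int.card_Icc]
      exact_mod_cast Int.toNat_of_nonneg h0
    have h2 := congrArg (fun z : ℤ => (z : ℝ)) h1
    push_cast at h2
    rw [Nat.cast_inj.mpr rfl] at h2 <;> try skip
    exact_mod_cast h2
  rw [hsum, hcard]
  have hclR : (⌈l⌉:ℝ) ≤ (⌊u⌋:ℝ) := by exact_mod_cast hcl
  constructor
  · rcases le_or_gt a 2 with h | h
    · linarith
    · linarith
  · linarith

lemma integral_bds {f : ℝ × ℝ → ℝ} {s : Set (ℝ × ℝ)} (hs : MeasurableSet s)
    (hfin : volume s ≠ ⊤) (hf : Measurable f) {c C : ℝ}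
    (h1 : ∀ x ∈ s, c ≤ f x) (h2 : ∀ x ∈ s, f x ≤ C) :
    c * (volume s).toReal ≤ ∫ x in s, f x ∧ ∫ x in s, f x ≤ C * (volume s).toReal := by
  have hconst : ∀ d : ℝ, IntegrableOn (fun _ : ℝ × ℝ => d) s := by
    intro d
    exact integrableOn_const hfin
  have hint : IntegrableOn f s := by
    apply Integrable.mono' (hconst (max |c| |C|)) hf.aestronglyMeasurable.restrict
    filter_upwards [ae_restrict_mem hs] with x hx
    rw [Real.norm_eq_abs, abs_le]
    refine ⟨?_, ?_⟩
    · have := h1 x hx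
      have := neg_abs_le c
      have := le_max_left |c| |C|
      linarith
    · have := h2 x hx
      have := le_abs_self C
      have := le_max_right |c| |C|
      linarith
  constructor
  · have := setIntegral_mono_on (hconst c) hint hs h1
    rwa [setIntegral_const, smul_eq_mul, mul_comm] at this
  · have := setIntegral_mono_on hint (hconst C) hs h2
    rwa [setIntegral_const, smul_eq_mul, mul_comm] at this

/-- with noise spectral density equal to the indicator of `[−aρ,aρ]²` for
arbitrary real `a ≥ 1`, the static sampling noise variance grows as `Θ(a²)` and the mobile
sampling noise variance grows as `Θ(a)`. -/
theorem variance_growth_orders (ρ : ℝ) (hρ : 0 < ρ)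
    (Sν : ℝ → ℝ × ℝ → ℝ)
    (hSν : ∀ (a : ℝ) (ω : ℝ × ℝ),
      Sν a ω = if |ω.1| ≤ a * ρ ∧ |ω.2| ≤ a * ρ then 1 else 0) :
    ∃ c₁ C₁ c₂ C₂ : ℝ, 0 < c₁ ∧ 0 < C₁ ∧ 0 < c₂ ∧ 0 < C₂ ∧
      ∀ a : ℝ, 1 ≤ a →
        (c₁ * a ^ 2 ≤ (1 / (4 * π ^ 2)) * (∫ ω in (Set.Icc (-ρ) ρ ×ˢ Set.Icc (-ρ) ρ),
            ∑' n : ℤ × ℤ, Sν a (ω.1 - 2 * n.1 * ρ, ω.2 - 2 * n.2 * ρ)) ∧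
          (1 / (4 * π ^ 2)) * (∫ ω in (Set.Icc (-ρ) ρ ×ˢ Set.Icc (-ρ) ρ),
            ∑' n : ℤ × ℤ, Sν a (ω.1 - 2 * n.1 * ρ, ω.2 - 2 * n.2 * ρ)) ≤ C₁ * a ^ 2) ∧
        (c₂ * a ≤ (1 / (4 * π ^ 2)) * (∫ ω in (Set.Icc (-ρ) ρ ×ˢ Set.Icc (-ρ) ρ),
            ∑' n : ℤ, Sν a (ω.1, ω.2 - 2 * n * ρ)) ∧
          (1 / (4 * π ^ 2)) * (∫ ω in (Set.Icc (-ρ) ρ ×ˢ Set.Icc (-ρ) ρ),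
            ∑' n : ℤ, Sν a (ω.1, ω.2 - 2 * n * ρ)) ≤ C₂ * a) := by
  have hπ : (0:ℝ) < π ^ 2 := by positivity
  refine ⟨ρ^2 / (4 * π^2), 4 * ρ^2 / π^2, ρ^2 / (2 * π^2), 2 * ρ^2 / π^2,
    by positivity, by positivity, by positivity, by positivity, ?_⟩
  intro a ha
  set box : Set (ℝ × ℝ) := Set.Icc (-ρ) ρ ×ˢ Set.Icc (-ρ) ρ with hboxdef
  have hbox : MeasurableSet box := measurableSet_Icc.prod measurableSet_Icc
  have hvol : volume box = ENNReal.ofReal (2*ρ) * ENNReal.ofReal (2*ρ) := by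
    rw [hboxdef, MeasureTheory.Measure.volume_eq_prod, MeasureTheory.Measure.prod_prod,
      Real.volume_Icc]
    norm_num
    ring_nf
    rw [ENNReal.ofReal_mul hρ.le, ENNReal.ofReal_ofNat]; ring
  have hvolR : (volume box).toReal = 4 * ρ^2 := by
    rw [hvol, ENNReal.toReal_mul, ENNReal.toReal_ofReal (by linarith)]
    ring
  have hvolfin : volume box ≠ ⊤ := by
    rw [hvol]
    exact ENNReal.mul_ne_top ENNReal.ofReal_ne_top ENNReal.ofReal_ne_top
  have haρ : ρ ≤ a * ρ := by nlinarith
  -- the one-dimensional counting function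
  set cnt : ℝ → ℝ :=
    fun t => ∑ n ∈ Finset.Icc (-⌈a⌉) ⌈a⌉, if |t - 2 * (n:ℝ) * ρ| ≤ a * ρ then (1:ℝ) else 0
    with hcnt
  have hcntMeas : Measurable cnt := by
    apply Finset.measurable_sum
    intro n _
    exact Measurable.ite (measurableSet_le ((measurable_id.sub_const _).abs) measurable_const)
      measurable_const measurable_const
  have hmem : ∀ ω : ℝ × ℝ, ω ∈ box → |ω.1| ≤ ρ ∧ |ω.2| ≤ ρ := by
    intro ω hω
    obtain ⟨h1, h2⟩ := hω
    exact ⟨abs_le.mpr ⟨h1.1, h1.2⟩, abs_le.mpr ⟨h2.1, h2.2⟩⟩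
  -- mobile: equality with finite sum on the box
  have hEqm : ∀ ω : ℝ × ℝ, ω ∈ box →
      (∑' n : ℤ, Sν a (ω.1, ω.2 - 2 * n * ρ)) = cnt ω.2 := by
    intro ω hω
    obtain ⟨hω1, hω2⟩ := hmem ω hω
    rw [tsum_eq_sum (s := Finset.Icc (-⌈a⌉) ⌈a⌉) ?_]
    · apply Finset.sum_congr rfl
      intro n _
      rw [hSν]
      simp only
      by_cases h : |ω.2 - 2 * (n:ℝ) * ρ| ≤ a * ρ
      · rw [if_pos ⟨le_trans hω1 haρ, h⟩, if_pos h]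
      · rw [if_neg (fun hh => h hh.2), if_neg h]
    · intro n hn
      rw [hSν]
      simp only
      rw [if_neg]
      rintro ⟨-, h2⟩
      exact hn (aux_mem ρ a ω.2 hρ ha hω2 n h2)
  -- static: equality with product of counting functions on the box
  have hEqs : ∀ ω : ℝ × ℝ, ω ∈ box →
      (∑' n : ℤ × ℤ, Sν a (ω.1 - 2 * n.1 * ρ, ω.2 - 2 * n.2 * ρ)) = cnt ω.1 * cnt ω.2 := by
    intro ω hω
    obtain ⟨hω1, hω2⟩ := hmem ω hω
    rw [tsum_eq_sum (s := (Finset.Icc (-⌈a⌉) ⌈a⌉) ×ˢ (Finset.Icc (-⌈a⌉) ⌈a⌉)) ?_]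
    · rw [hcnt, Finset.sum_mul_sum, Finset.sum_product]
      apply Finset.sum_congr rfl
      intro n₁ _
      apply Finset.sum_congr rfl
      intro n₂ _
      rw [hSν]
      simp only
      by_cases h1 : |ω.1 - 2 * (n₁:ℝ) * ρ| ≤ a * ρ <;>
        by_cases h2 : |ω.2 - 2 * (n₂:ℝ) * ρ| ≤ a * ρ <;>
        simp [h1, h2]
    · intro p hp
      rw [hSν]
      simp only
      rw [if_neg]
      rintro ⟨h1, h2⟩
      exact hp (Finset.mem_product.mpr
        ⟨aux_mem ρ a ω.1 hρ ha hω1 p.1 h1, aux_mem ρ a ω.2 hρ ha hω2 p.2 h2⟩)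
  have ha0 : (0:ℝ) < a := lt_of_lt_of_le one_pos ha
  -- mobile bounds
  have hbm : a / 2 * (volume box).toReal ≤
        (∫ ω in box, ∑' n : ℤ, Sν a (ω.1, ω.2 - 2 * n * ρ)) ∧
      (∫ ω in box, ∑' n : ℤ, Sν a (ω.1, ω.2 - 2 * n * ρ)) ≤ 2 * a * (volume box).toReal := by
    have hcongr : (∫ ω in box, ∑' n : ℤ, Sν a (ω.1, ω.2 - 2 * n * ρ))
        = ∫ ω in box, cnt ω.2 := setIntegral_congr_fun hbox (fun ω hω => hEqm ω hω)
    rw [hcongr]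
    exact integral_bds hbox hvolfin (hcntMeas.comp measurable_snd)
      (fun ω hω => (aux_count ρ a ω.2 hρ ha (hmem ω hω).2).1)
      (fun ω hω => (aux_count ρ a ω.2 hρ ha (hmem ω hω).2).2)
  -- static bounds
  have hbs : a^2 / 4 * (volume box).toReal ≤
        (∫ ω in box, ∑' n : ℤ × ℤ, Sν a (ω.1 - 2 * n.1 * ρ, ω.2 - 2 * n.2 * ρ)) ∧
      (∫ ω in box, ∑' n : ℤ × ℤ, Sν a (ω.1 - 2 * n.1 * ρ, ω.2 - 2 * n.2 * ρ))
        ≤ 4 * a^2 * (volume box).toReal := by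
    have hcongr : (∫ ω in box, ∑' n : ℤ × ℤ, Sν a (ω.1 - 2 * n.1 * ρ, ω.2 - 2 * n.2 * ρ))
        = ∫ ω in box, cnt ω.1 * cnt ω.2 := setIntegral_congr_fun hbox (fun ω hω => hEqs ω hω)
    rw [hcongr]
    apply integral_bds hbox hvolfin ((hcntMeas.comp measurable_fst).mul (hcntMeas.comp measurable_snd))
    · intro ω hω
      have h1 : a / 2 ≤ cnt ω.1 ∧ cnt ω.1 ≤ 2 * a := aux_count ρ a ω.1 hρ ha (hmem ω hω).1
      have h2 : a / 2 ≤ cnt ω.2 ∧ cnt ω.2 ≤ 2 * a := aux_count ρ a ω.2 hρ ha (hmem ω hω).2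
      simp only [Pi.mul_apply, Function.comp_apply]
      nlinarith [h1.1, h1.2, h2.1, h2.2]
    · intro ω hω
      have h1 : a / 2 ≤ cnt ω.1 ∧ cnt ω.1 ≤ 2 * a := aux_count ρ a ω.1 hρ ha (hmem ω hω).1
      have h2 : a / 2 ≤ cnt ω.2 ∧ cnt ω.2 ≤ 2 * a := aux_count ρ a ω.2 hρ ha (hmem ω hω).2
      simp only [Pi.mul_apply, Function.comp_apply]
      nlinarith [h1.1, h1.2, h2.1, h2.2]
  rw [hvolR] at hbm hbs
  have hK : (0:ℝ) < 1 / (4 * π^2) := by positivity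
  refine ⟨⟨?_, ?_⟩, ?_, ?_⟩
  · calc ρ^2 / (4*π^2) * a^2 = (1/(4*π^2)) * (a^2/4 * (4*ρ^2)) := by ring
    _ ≤ _ := mul_le_mul_of_nonneg_left hbs.1 hK.le
  · calc (1/(4*π^2)) * _ ≤ (1/(4*π^2)) * (4*a^2 * (4*ρ^2)) :=
        mul_le_mul_of_nonneg_left hbs.2 hK.le
    _ = 4*ρ^2/π^2 * a^2 := by ring
  · calc ρ^2 / (2*π^2) * a = (1/(4*π^2)) * (a/2 * (4*ρ^2)) := by ring
    _ ≤ _ := mul_le_mul_of_nonneg_left hbm.1 hK.le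
  · calc (1/(4*π^2)) * _ ≤ (1/(4*π^2)) * (2*a * (4*ρ^2)) :=
        mul_le_mul_of_nonneg_left hbm.2 hK.le
    _ = 2*ρ^2/π^2 * a := by ring
end

section
/- With the box filter of half-width Δ_b and sampling interval Δ_x, the noise variance σ²_{m2}(Δ_b, Δ_x) given by (κ²Δ_b²/4π⁴) ∫_Ω Σ_{n∈ℤ²} S_ν(ω − (2n_xπ/Δ_x, 2n_yρ)) sinc²((Δ_b/π)(ω_x − 2πn_x/Δ_x)) dω satisfies lim_{Δ_b→0} lim_{Δ_x→0} σ²_{m2} = σ²_{m1}, where σ²_{m1} = (1/4π²) ∫_Ω Σ_{n∈ℤ} S_ν(ω − (0, 2nρ)) dω is the ideal-low-pass-filter noise variance. -/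
open MeasureTheory Real Filter Topology
open scoped ENNReal

/-- `sinc x = sin(πx)/(πx)`, with `sinc 0 = 1`. -/
noncomputable def sinc (x : ℝ) : ℝ := if x = 0 then 1 else Real.sin (π * x) / (π * x)

lemma sinc_zero : _root_.sinc 0 = 1 := by simp [_root_.sinc]


lemma sinc_sq_le_one (x : ℝ) : _root_.sinc x ^ 2 ≤ 1 := by
  rcases eq_or_ne x 0 with h | h
  · simp [_root_.sinc, h]
  · rw [_root_.sinc, if_neg h, div_pow, div_le_one (by positivity)]
    exact Real.sin_sq_le_sq

lemma sinc_sq_le (x : ℝ) (hx : x ≠ 0) : _root_.sinc x ^ 2 ≤ 1 / (π * x) ^ 2 := by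
  rw [_root_.sinc, if_neg hx, div_pow, div_le_div_iff₀ (by positivity) (by positivity), one_mul]
  nlinarith [Real.sin_sq_le_one (π * x), sq_nonneg (π * x)]

lemma sinc_nonneg_sq (x : ℝ) : 0 ≤ _root_.sinc x ^ 2 := sq_nonneg _

lemma continuous_sinc : Continuous _root_.sinc := by
  rw [continuous_iff_continuousAt]
  intro x
  rcases eq_or_ne x 0 with rfl | hx
  · unfold ContinuousAt
    rw [_root_.sinc_zero, ← nhdsNE_sup_pure, tendsto_sup]
    constructor
    · have h1 : Tendsto (slope Real.sin 0) (𝓝[≠] 0) (𝓝 1) := by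
        simpa using hasDerivAt_iff_tendsto_slope.mp (Real.hasDerivAt_sin 0)
      have h2 : Tendsto (fun x : ℝ => π * x) (𝓝[≠] 0) (𝓝[≠] 0) := by
        apply tendsto_nhdsWithin_of_tendsto_nhds_of_eventually_within
        · have : Tendsto (fun x : ℝ => π * x) (𝓝 0) (𝓝 (π * 0)) :=
            (continuous_const.mul continuous_id).tendsto 0
          simpa using this.mono_left nhdsWithin_le_nhds
        · filter_upwards [self_mem_nhdsWithin] with y hy
          simp only [Set.mem_compl_iff, Set.mem_singleton_iff] at hy ⊢
          exact mul_ne_zero (ne_of_gt Real.pi_pos) hy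
      have := h1.comp h2
      apply this.congr'
      filter_upwards [self_mem_nhdsWithin] with y hy
      simp only [Set.mem_compl_iff, Set.mem_singleton_iff] at hy
      rw [Function.comp_apply, slope_def_field, _root_.sinc, if_neg hy]
      field_simp; rw [Real.sin_zero]; ring
    · have : Tendsto _root_.sinc (pure (0:ℝ)) (pure (_root_.sinc 0)) := tendsto_pure_pure _ _
      simpa [_root_.sinc_zero] using this.mono_right (pure_le_nhds _)
  · have : ∀ᶠ y in 𝓝 x, _root_.sinc y = Real.sin (π * y) / (π * y) := by
      filter_upwards [isOpen_compl_singleton.mem_nhds hx] with y hy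
      simp only [Set.mem_compl_iff, Set.mem_singleton_iff] at hy
      rw [_root_.sinc, if_neg hy]
    apply ContinuousAt.congr ?_ (this.mono fun y hy => hy.symm)
    exact (Real.continuous_sin.comp (continuous_const.mul continuous_id)).continuousAt.div
      (continuous_const.mul continuous_id).continuousAt (mul_ne_zero (ne_of_gt Real.pi_pos) hx)

lemma count_le_two (ρ a x : ℝ) (hρ : 0 < ρ) (ha : 2 * ρ ≤ a) :
    ∑' n : ℤ, (Set.Icc (-ρ) ρ).indicator (fun _ => (1:ℝ≥0∞)) (x + n * a) ≤ 2 := by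
  have ha0 : 0 < a := lt_of_lt_of_le (by linarith) ha
  set c : ℝ := (-ρ - x) / a with hc
  set k : ℤ := ⌈c⌉ with hk
  have hsupp : ∀ n : ℤ, n ∉ ({k, k+1} : Finset ℤ) →
      (Set.Icc (-ρ) ρ).indicator (fun _ => (1:ℝ≥0∞)) (x + n * a) = 0 := by
    intro n hn
    rw [Set.indicator_apply_eq_zero]
    intro hmem
    exfalso
    obtain ⟨h1, h2⟩ := hmem
    have hcn : c ≤ n := by rw [hc, div_le_iff₀ ha0]; push_cast; linarith
    have hnc : (n : ℝ) ≤ c + 1 := by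
      have h3 : (n:ℝ) * a ≤ ρ - x := by linarith
      have h4 : (n:ℝ) ≤ (ρ - x)/a := by rw [le_div_iff₀ ha0]; exact h3
      have h5 : (ρ - x)/a = c + 2*ρ/a := by rw [hc]; ring
      have h6 : 2*ρ/a ≤ 1 := by rw [div_le_one ha0]; exact ha
      linarith
    have hk1 : k ≤ n := Int.ceil_le.mpr hcn
    have hk2 : n ≤ k + 1 := by
      have : (n:ℝ) ≤ (k:ℝ) + 1 := le_trans hnc (by
        have := Int.le_ceil c; push_cast; linarith)
      exact_mod_cast this
    simp only [Finset.mem_insert, Finset.mem_singleton] at hn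
    push_neg at hn
    omega
  rw [tsum_eq_sum hsupp]
  calc ∑ n ∈ ({k, k+1} : Finset ℤ), (Set.Icc (-ρ) ρ).indicator (fun _ => (1:ℝ≥0∞)) (x + n * a)
      ≤ ∑ _n ∈ ({k, k+1} : Finset ℤ), 1 := by
        apply Finset.sum_le_sum
        intro i _
        exact Set.indicator_apply_le' (fun _ => le_rfl) (fun _ => zero_le_one)
    _ ≤ 2 := by
        rw [Finset.sum_const, nsmul_eq_mul, mul_one]
        have h7 : ({k, k+1} : Finset ℤ).card ≤ 2 := by
          have := Finset.card_insert_le k ({k+1} : Finset ℤ)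
          simpa using this
        exact_mod_cast h7

lemma tile_general {ι : Type*} [Countable ι] (S : ℝ × ℝ → ℝ≥0∞) (hS : Measurable S)
    (B : Set (ℝ × ℝ)) (hB : MeasurableSet B) (v : ι → ℝ × ℝ) (M : ℝ≥0∞)
    (hM : ∀ ω, ∑' n, B.indicator (fun _ => (1:ℝ≥0∞)) (ω + v n) ≤ M) :
    ∑' n, ∫⁻ ω in B, S (ω - v n) ≤ M * ∫⁻ ω, S ω := by
  have hmeas : ∀ n : ι, Measurable fun ω => S (ω - v n) :=
    fun n => hS.comp (measurable_id.sub measurable_const)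
  have key : ∀ n : ι, (∫⁻ ω in B, S (ω - v n)) =
      ∫⁻ ω, B.indicator (fun _ => (1:ℝ≥0∞)) (ω + v n) * S ω := by
    intro n
    rw [← lintegral_indicator hB]
    have hmp := measurePreserving_add_right (volume : Measure (ℝ × ℝ)) (v n)
    rw [← hmp.lintegral_comp ((hmeas n).indicator hB)]
    congr 1
    funext ω
    by_cases h : ω + v n ∈ B <;> simp [Set.indicator, h]
  calc ∑' n, ∫⁻ ω in B, S (ω - v n)
      = ∑' n : ι, ∫⁻ ω, B.indicator (fun _ => (1:ℝ≥0∞)) (ω + v n) * S ω := by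
        exact tsum_congr key
    _ = ∫⁻ ω, ∑' n : ι, B.indicator (fun _ => (1:ℝ≥0∞)) (ω + v n) * S ω := by
        refine (lintegral_tsum fun n => Measurable.aemeasurable ?_).symm
        exact ((measurable_const.indicator hB).comp (measurable_id.add_const (v n))).mul hS
    _ = ∫⁻ ω, (∑' n : ι, B.indicator (fun _ => (1:ℝ≥0∞)) (ω + v n)) * S ω := by
        congr 1; funext ω; exact ENNReal.tsum_mul_right
    _ ≤ ∫⁻ ω, M * S ω := lintegral_mono fun ω => mul_le_mul_left (hM ω) _
    _ = M * ∫⁻ ω, S ω := lintegral_const_mul M hS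

lemma indicator_box (ρ : ℝ) (z : ℝ × ℝ) :
    (Set.Icc (-ρ) ρ ×ˢ Set.Icc (-ρ) ρ).indicator (fun _ => (1:ℝ≥0∞)) z =
      (Set.Icc (-ρ) ρ).indicator (fun _ => (1:ℝ≥0∞)) z.1 *
      (Set.Icc (-ρ) ρ).indicator (fun _ => (1:ℝ≥0∞)) z.2 := by
  by_cases h1 : z.1 ∈ Set.Icc (-ρ) ρ
  · by_cases h2 : z.2 ∈ Set.Icc (-ρ) ρ
    · rw [Set.indicator_of_mem (Set.mem_prod.mpr ⟨h1, h2⟩), Set.indicator_of_mem h1,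
        Set.indicator_of_mem h2, one_mul]
    · rw [Set.indicator_of_notMem (fun h => h2 (Set.mem_prod.mp h).2),
        Set.indicator_of_notMem h2, mul_zero]
  · rw [Set.indicator_of_notMem (fun h => h1 (Set.mem_prod.mp h).1),
      Set.indicator_of_notMem h1, zero_mul]

lemma tile2 (S : ℝ × ℝ → ℝ≥0∞) (hS : Measurable S) (ρ a b : ℝ) (hρ : 0 < ρ)
    (ha : 2 * ρ ≤ a) (hb : 2 * ρ ≤ b) :
    ∑' n : ℤ × ℤ, ∫⁻ ω in (Set.Icc (-ρ) ρ ×ˢ Set.Icc (-ρ) ρ),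
        S (ω.1 - n.1 * a, ω.2 - n.2 * b) ≤ 4 * ∫⁻ ω, S ω := by
  have hB : MeasurableSet (Set.Icc (-ρ) ρ ×ˢ Set.Icc (-ρ) ρ) :=
    (measurableSet_Icc).prod measurableSet_Icc
  have key := tile_general S hS _ hB (fun n : ℤ × ℤ => ((n.1 * a : ℝ), (n.2 * b : ℝ))) 4 ?_
  · calc ∑' n : ℤ × ℤ, ∫⁻ ω in (Set.Icc (-ρ) ρ ×ˢ Set.Icc (-ρ) ρ),
          S (ω.1 - n.1 * a, ω.2 - n.2 * b)
        = ∑' n : ℤ × ℤ, ∫⁻ ω in (Set.Icc (-ρ) ρ ×ˢ Set.Icc (-ρ) ρ),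
          S (ω - ((n.1 * a : ℝ), (n.2 * b : ℝ))) := by
          exact tsum_congr fun n => lintegral_congr fun ω => rfl
      _ ≤ 4 * ∫⁻ ω, S ω := key
  · intro ω
    calc ∑' n : ℤ × ℤ, (Set.Icc (-ρ) ρ ×ˢ Set.Icc (-ρ) ρ).indicator (fun _ => (1:ℝ≥0∞))
          (ω + ((n.1 * a : ℝ), (n.2 * b : ℝ)))
        = ∑' n : ℤ × ℤ, ((Set.Icc (-ρ) ρ).indicator (fun _ => (1:ℝ≥0∞)) (ω.1 + n.1 * a) *
            (Set.Icc (-ρ) ρ).indicator (fun _ => (1:ℝ≥0∞)) (ω.2 + n.2 * b)) := by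
          apply tsum_congr; intro n; exact indicator_box ρ _
      _ = (∑' n1 : ℤ, (Set.Icc (-ρ) ρ).indicator (fun _ => (1:ℝ≥0∞)) (ω.1 + n1 * a)) *
          (∑' n2 : ℤ, (Set.Icc (-ρ) ρ).indicator (fun _ => (1:ℝ≥0∞)) (ω.2 + n2 * b)) := by
          rw [ENNReal.tsum_prod (f := fun n1 n2 : ℤ =>
            (Set.Icc (-ρ) ρ).indicator (fun _ => (1:ℝ≥0∞)) (ω.1 + n1 * a) *
            (Set.Icc (-ρ) ρ).indicator (fun _ => (1:ℝ≥0∞)) (ω.2 + n2 * b))]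
          rw [← ENNReal.tsum_mul_right]
          apply tsum_congr; intro n1
          exact ENNReal.tsum_mul_left
      _ ≤ 2 * 2 := mul_le_mul' (count_le_two ρ a ω.1 hρ ha) (count_le_two ρ b ω.2 hρ hb)
      _ = 4 := by norm_num

lemma tile1 (S : ℝ × ℝ → ℝ≥0∞) (hS : Measurable S) (ρ b : ℝ) (hρ : 0 < ρ)
    (hb : 2 * ρ ≤ b) :
    ∑' n : ℤ, ∫⁻ ω in (Set.Icc (-ρ) ρ ×ˢ Set.Icc (-ρ) ρ),
        S (ω.1, ω.2 - n * b) ≤ 2 * ∫⁻ ω, S ω := by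
  have hB : MeasurableSet (Set.Icc (-ρ) ρ ×ˢ Set.Icc (-ρ) ρ) :=
    (measurableSet_Icc).prod measurableSet_Icc
  have key := tile_general S hS _ hB (fun n : ℤ => ((0 : ℝ), (n * b : ℝ))) 2 ?_
  · calc ∑' n : ℤ, ∫⁻ ω in (Set.Icc (-ρ) ρ ×ˢ Set.Icc (-ρ) ρ), S (ω.1, ω.2 - n * b)
        = ∑' n : ℤ, ∫⁻ ω in (Set.Icc (-ρ) ρ ×ˢ Set.Icc (-ρ) ρ),
          S (ω - ((0 : ℝ), (n * b : ℝ))) := by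
          exact tsum_congr fun n => lintegral_congr fun ω => by
            show S _ = S _
            congr 1
            simp [Prod.ext_iff]
      _ ≤ 2 * ∫⁻ ω, S ω := key
  · intro ω
    calc ∑' n : ℤ, (Set.Icc (-ρ) ρ ×ˢ Set.Icc (-ρ) ρ).indicator (fun _ => (1:ℝ≥0∞))
          (ω + ((0 : ℝ), (n * b : ℝ)))
        = ∑' n : ℤ, ((Set.Icc (-ρ) ρ).indicator (fun _ => (1:ℝ≥0∞)) (ω.1 + 0) *
            (Set.Icc (-ρ) ρ).indicator (fun _ => (1:ℝ≥0∞)) (ω.2 + n * b)) := by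
          apply tsum_congr; intro n; exact indicator_box ρ _
      _ = (Set.Icc (-ρ) ρ).indicator (fun _ => (1:ℝ≥0∞)) (ω.1 + 0) *
          ∑' n : ℤ, (Set.Icc (-ρ) ρ).indicator (fun _ => (1:ℝ≥0∞)) (ω.2 + n * b) :=
          ENNReal.tsum_mul_left
      _ ≤ 1 * 2 := mul_le_mul'
          (Set.indicator_apply_le' (fun _ => le_rfl) (fun _ => zero_le_one))
          (count_le_two ρ b ω.2 hρ hb)
      _ = 2 := one_mul 2


lemma sinc_ne_zero_of_abs_lt (t : ℝ) (ht : |t| < 1) : _root_.sinc t ≠ 0 := by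
  rcases eq_or_ne t 0 with rfl | h
  · rw [_root_.sinc_zero]; norm_num
  · rw [_root_.sinc, if_neg h]
    apply div_ne_zero ?_ (mul_ne_zero (ne_of_gt Real.pi_pos) h)
    intro hs
    rw [Real.sin_eq_zero_iff_of_lt_of_lt] at hs
    · exact h (by simpa [ne_of_gt Real.pi_pos] using mul_eq_zero.mp hs)
    · nlinarith [Real.pi_pos, abs_lt.mp ht]
    · nlinarith [Real.pi_pos, abs_lt.mp ht]

lemma Q_cont (Δb : ℝ) : Continuous fun ω : ℝ => _root_.sinc (Δb * ω / π) ^ 2 :=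
  (_root_.continuous_sinc.comp ((continuous_const.mul continuous_id).div_const π)).pow 2

lemma Q_pos (ρ : ℝ) (hρ : 0 < ρ) (Δb : ℝ) (hΔb : 0 < Δb) :
    0 < ∫ ω in (-ρ)..ρ, _root_.sinc (Δb * ω / π) ^ 2 := by
  set δ : ℝ := min ρ (π / (2 * Δb)) with hδ
  have hδ0 : 0 < δ := lt_min hρ (by positivity)
  have hδρ : δ ≤ ρ := min_le_left _ _
  have hInt : ∀ a b : ℝ, IntervalIntegrable (fun ω => _root_.sinc (Δb * ω / π) ^ 2) volume a b :=
    fun a b => (Q_cont Δb).intervalIntegrable a b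
  have h1 : 0 < ∫ ω in (-δ)..δ, _root_.sinc (Δb * ω / π) ^ 2 := by
    apply intervalIntegral.intervalIntegral_pos_of_pos_on (hInt _ _) ?_ (by linarith)
    intro x hx
    have habs : |Δb * x / π| < 1 := by
      rw [abs_div, abs_mul, abs_of_pos hΔb, abs_of_pos Real.pi_pos, div_lt_one Real.pi_pos]
      have hxδ : |x| < δ := abs_lt.mpr ⟨by linarith [hx.1], by linarith [hx.2]⟩
      have : δ ≤ π / (2 * Δb) := min_le_right _ _
      calc Δb * |x| < Δb * δ := by exact mul_lt_mul_of_pos_left hxδ hΔb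
        _ ≤ Δb * (π / (2 * Δb)) := by nlinarith
        _ = π / 2 := by field_simp
        _ < π := by linarith [Real.pi_pos]
    have hne := sinc_ne_zero_of_abs_lt _ habs
    exact lt_of_le_of_ne (sq_nonneg _) (Ne.symm (pow_ne_zero 2 hne))
  have e1 := intervalIntegral.integral_add_adjacent_intervals (hInt (-ρ) (-δ)) (hInt (-δ) δ)
  have e2 := intervalIntegral.integral_add_adjacent_intervals (hInt (-ρ) δ) (hInt δ ρ)
  have n1 : 0 ≤ ∫ ω in (-ρ)..(-δ), _root_.sinc (Δb * ω / π) ^ 2 :=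
    intervalIntegral.integral_nonneg (by linarith) (fun x _ => sq_nonneg _)
  have n2 : 0 ≤ ∫ ω in δ..ρ, _root_.sinc (Δb * ω / π) ^ 2 :=
    intervalIntegral.integral_nonneg (by linarith) (fun x _ => sq_nonneg _)
  linarith

lemma Q_tendsto (ρ : ℝ) (hρ : 0 < ρ) :
    Tendsto (fun Δb => ∫ ω in (-ρ)..ρ, _root_.sinc (Δb * ω / π) ^ 2) (𝓝[>] (0:ℝ)) (𝓝 (2 * ρ)) := by
  rw [tendsto_iff_seq_tendsto]
  intro u hu
  have hu0 : Tendsto u atTop (𝓝 0) := hu.mono_right nhdsWithin_le_nhds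
  have hle : (-ρ : ℝ) ≤ ρ := by linarith
  have hrw : ∀ k, (fun Δb => ∫ ω in (-ρ)..ρ, _root_.sinc (Δb * ω / π) ^ 2) (u k) =
      ∫ ω in Set.Ioc (-ρ) ρ, _root_.sinc (u k * ω / π) ^ 2 := fun k =>
    intervalIntegral.integral_of_le hle
  have htarget : (2 * ρ : ℝ) = ∫ _ω in Set.Ioc (-ρ) ρ, (1 : ℝ) := by
    rw [setIntegral_const, measureReal_def, Real.volume_Ioc, smul_eq_mul, mul_one,
      ENNReal.toReal_ofReal (by linarith)]
    ring
  have : ((fun Δb => ∫ ω in (-ρ)..ρ, _root_.sinc (Δb * ω / π) ^ 2) ∘ u) =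
      fun k => ∫ ω in Set.Ioc (-ρ) ρ, _root_.sinc (u k * ω / π) ^ 2 := funext fun k => hrw k
  rw [this, htarget]
  apply tendsto_integral_of_dominated_convergence (bound := fun _ => (1:ℝ))
  · exact fun k => ((Q_cont (u k))).aestronglyMeasurable
  · have : IntegrableOn (fun _ : ℝ => (1:ℝ)) (Set.Ioc (-ρ) ρ) volume := by
      rw [integrableOn_const_iff]
      right
      rw [Real.volume_Ioc]
      exact ENNReal.ofReal_lt_top
    exact this
  · intro k
    filter_upwards with ω
    rw [Real.norm_eq_abs, abs_of_nonneg (sq_nonneg _)]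
    exact sinc_sq_le_one _
  · filter_upwards with ω
    have hc : Continuous fun Δb : ℝ => _root_.sinc (Δb * ω / π) ^ 2 :=
      (_root_.continuous_sinc.comp ((continuous_id.mul continuous_const).div_const π)).pow 2
    have := (hc.tendsto 0).comp hu0
    simpa [Function.comp_def, _root_.sinc_zero] using this

lemma integral_tsum_eq_toReal {ι : Type*} [Countable ι] (B : Set (ℝ × ℝ))
    (F : ι → ℝ × ℝ → ℝ) (G : ι → ℝ × ℝ → ℝ≥0∞)
    (hae : ∀ᵐ ω ∂(volume.restrict B), ∀ n, ENNReal.ofReal (F n ω) = G n ω ∧ 0 ≤ F n ω)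
    (hGmeas : ∀ n, Measurable (G n)) (hGne : ∀ n ω, G n ω ≠ ⊤)
    (hfin : ∑' n, ∫⁻ ω in B, G n ω ≠ ⊤) :
    ∫ ω in B, (∑' n, F n ω) = (∫⁻ ω in B, ∑' n, G n ω).toReal := by
  have hlt : ∫⁻ ω in B, ∑' n, G n ω ≠ ⊤ := by
    rw [lintegral_tsum (fun n => (hGmeas n).aemeasurable)]; exact hfin
  have hmeas : Measurable fun ω => ∑' n, G n ω := Measurable.ennreal_tsum hGmeas
  have haefin : ∀ᵐ ω ∂(volume.restrict B), (∑' n, G n ω) < ⊤ :=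
    ae_lt_top hmeas hlt
  rw [← integral_toReal hmeas.aemeasurable haefin]
  apply integral_congr_ae
  filter_upwards [hae] with ω h
  rw [ENNReal.tsum_toReal_eq (fun n => hGne n ω)]
  exact tsum_congr fun n => by rw [← (h n).1, ENNReal.toReal_ofReal (h n).2]

/-- the box-filter noise variance `σ²_{m2}(Δ_b, Δ_x)` converges, in the iterated
limit `Δ_x → 0⁺` followed by `Δ_b → 0⁺`, to the ideal-low-pass-filter noise variance
`σ²_{m1}`. -/
theorem box_filter_variance_limit (ρ : ℝ) (hρ : 0 < ρ) (Sν : ℝ × ℝ → ℝ)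
    (hnonneg : ∀ ω, 0 ≤ Sν ω) (hint : Integrable Sν)
    (hdecay : ∃ C r : ℝ, 2 < r ∧ ∀ ω : ℝ × ℝ, 1 ≤ ‖ω‖ → Sν ω ≤ C * ‖ω‖ ^ (-r))
    (κ : ℝ → ℝ)
    (hκ : ∀ Δb : ℝ, 0 < Δb → κ Δb = Real.sqrt (2 * ρ) *
      ((Δb ^ 2 / π ^ 2) * ∫ ω in (-ρ)..ρ, (_root_.sinc (Δb * ω / π)) ^ 2) ^ (-(1 / 2 : ℝ))) :
    ∃ L : ℝ → ℝ,
      (∀ Δb : ℝ, 0 < Δb →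
        Tendsto (fun Δx : ℝ =>
            (κ Δb ^ 2 * Δb ^ 2 / (4 * π ^ 4)) *
              ∫ ω in (Set.Icc (-ρ) ρ ×ˢ Set.Icc (-ρ) ρ),
                ∑' n : ℤ × ℤ,
                  Sν (ω.1 - 2 * n.1 * π / Δx, ω.2 - 2 * n.2 * ρ) *
                    (_root_.sinc ((Δb / π) * (ω.1 - 2 * π * n.1 / Δx))) ^ 2)
          (𝓝[>] (0 : ℝ)) (𝓝 (L Δb)))
      ∧ Tendsto L (𝓝[>] (0 : ℝ))
          (𝓝 ((1 / (4 * π ^ 2)) * ∫ ω in (Set.Icc (-ρ) ρ ×ˢ Set.Icc (-ρ) ρ),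
            ∑' n : ℤ, Sν (ω.1, ω.2 - 2 * n * ρ))) := by
  have hπ : (0:ℝ) < π := Real.pi_pos
  -- measurable nonnegative representative
  have hSm := hint.aestronglyMeasurable.aemeasurable
  set g : ℝ × ℝ → ℝ := fun ω => max (hSm.mk Sν ω) 0 with hgdef
  have hgmeas : Measurable g := hSm.measurable_mk.max measurable_const
  have hgeq : Sν =ᵐ[volume] g := by
    filter_upwards [hSm.ae_eq_mk] with ω h
    simp only [hgdef, ← h, max_eq_left (hnonneg ω)]
  have hg0 : ∀ ω, 0 ≤ g ω := fun ω => le_max_right _ _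
  set S : ℝ × ℝ → ℝ≥0∞ := fun ω => ENNReal.ofReal (g ω) with hSdef
  have hSmeas : Measurable S := ENNReal.measurable_ofReal.comp hgmeas
  have hgint : Integrable g := hint.congr hgeq
  set I : ℝ≥0∞ := ∫⁻ ω, S ω with hIdef
  have hIlt : I < ⊤ := hgint.lintegral_lt_top
  have hIne : I ≠ ⊤ := hIlt.ne
  set B : Set (ℝ × ℝ) := Set.Icc (-ρ) ρ ×ˢ Set.Icc (-ρ) ρ with hBdef
  have hBmeas : MeasurableSet B := measurableSet_Icc.prod measurableSet_Icc
  have haeShift : ∀ v : ℝ × ℝ,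
      (fun ω => Sν (ω - v)) =ᵐ[volume] fun ω => g (ω - v) := fun v =>
    ((measurePreserving_sub_right volume v).quasiMeasurePreserving).ae_eq_comp hgeq
  -- the periodized spectrum
  set T : ℝ × ℝ → ℝ≥0∞ := fun ω => ∑' n : ℤ, S (ω.1, ω.2 - 2 * n * ρ) with hTdef
  have hTmeas : Measurable T := Measurable.ennreal_tsum fun n =>
    hSmeas.comp (measurable_fst.prodMk (measurable_snd.sub_const _))
  have hmeasT : ∀ n : ℤ, Measurable fun ω : ℝ × ℝ => S (ω.1, ω.2 - 2 * n * ρ) :=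
    fun n => hSmeas.comp (measurable_fst.prodMk (measurable_snd.sub_const _))
  have hTsplit : ∫⁻ ω in B, T ω =
      ∑' n : ℤ, ∫⁻ ω in B, S (ω.1, ω.2 - 2 * n * ρ) :=
    lintegral_tsum (f := fun (n : ℤ) (ω : ℝ × ℝ) => S (ω.1, ω.2 - 2 * n * ρ))
      (fun n => (hmeasT n).aemeasurable)
  have hTint : ∫⁻ ω in B, T ω ≤ 2 * I := by
    rw [hTsplit]
    have := tile1 S hSmeas ρ (2 * ρ) hρ le_rfl
    refine le_trans (le_of_eq (tsum_congr fun n => ?_)) this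
    apply lintegral_congr fun ω => ?_
    congr 2
    push_cast; ring
  have hTne : ∫⁻ ω in B, T ω ≠ ⊤ :=
    (lt_of_le_of_lt hTint (ENNReal.mul_lt_top (by norm_num) hIlt)).ne
  -- identity for the target integral
  have htarget : ∫ ω in B, (∑' n : ℤ, Sν (ω.1, ω.2 - 2 * n * ρ)) =
      (∫⁻ ω in B, T ω).toReal := by
    refine integral_tsum_eq_toReal (ι := ℤ) B
      (fun n ω => Sν (ω.1, ω.2 - 2 * n * ρ)) (fun n ω => S (ω.1, ω.2 - 2 * n * ρ))
      ?_ hmeasT (fun n ω => ENNReal.ofReal_ne_top) ?_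
    · apply ae_restrict_of_ae
      rw [ae_all_iff]
      intro n
      filter_upwards [haeShift ((0:ℝ), (2 * n * ρ : ℝ))] with ω h
      refine ⟨?_, hnonneg _⟩
      have h2 : (ω - ((0:ℝ), (2 * n * ρ : ℝ))) = (ω.1, ω.2 - 2 * n * ρ) := by
        simp [Prod.ext_iff]
      have h3 : Sν (ω.1, ω.2 - 2 * n * ρ) = g (ω.1, ω.2 - 2 * n * ρ) := by
        rw [← h2]; exact h
      rw [h3]
    · rw [← hTsplit]; exact hTne
-- the Δb-dependent weight
  set W : ℝ → ℝ → ℝ≥0∞ := fun Δb x => ENNReal.ofReal (_root_.sinc ((Δb / π) * x) ^ 2) with hWdef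
  have hWmeas : ∀ Δb, Measurable (W Δb) := fun Δb =>
    ENNReal.measurable_ofReal.comp
      ((_root_.continuous_sinc.comp (continuous_const.mul continuous_id)).pow 2).measurable
  have hWle1 : ∀ Δb x, W Δb x ≤ 1 := fun Δb x =>
    ENNReal.ofReal_le_one.mpr (sinc_sq_le_one _)
  set H0 : ℝ → ℝ≥0∞ := fun Δb => ∫⁻ ω in B, T ω * W Δb ω.1 with hH0def
  have hH0le : ∀ Δb, H0 Δb ≤ ∫⁻ ω in B, T ω := fun Δb =>
    lintegral_mono fun ω => le_trans (mul_le_mul_right (hWle1 _ _) _) (le_of_eq (mul_one _))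
  have hH0ne : ∀ Δb, H0 Δb ≠ ⊤ := fun Δb => ((hH0le Δb).trans_lt hTne.lt_top).ne
  refine ⟨fun Δb => (κ Δb ^ 2 * Δb ^ 2 / (4 * π ^ 4)) * (H0 Δb).toReal, ?_, ?_⟩
  · -- inner limit in Δx, for fixed Δb > 0
    intro Δb hΔb
    set cb : ℝ := κ Δb ^ 2 * Δb ^ 2 / (4 * π ^ 4) with hcbdef
    have hcb0 : 0 ≤ cb := by positivity
    set Gn : ℝ → ℤ × ℤ → ℝ × ℝ → ℝ≥0∞ := fun Δx n ω =>
      S (ω.1 - 2 * n.1 * π / Δx, ω.2 - 2 * n.2 * ρ) * W Δb (ω.1 - 2 * π * n.1 / Δx)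
      with hGndef
    set J : ℝ → ℤ × ℤ → ℝ≥0∞ := fun Δx n => ∫⁻ ω in B, Gn Δx n ω with hJdef
    set K : ℝ → ℤ × ℤ → ℝ≥0∞ := fun Δx n =>
      ∫⁻ ω in B, S (ω.1 - 2 * n.1 * π / Δx, ω.2 - 2 * n.2 * ρ) with hKdef
    set R : ℝ → ℝ≥0∞ := fun Δx =>
      ∑' n1 : ℤ, if n1 = 0 then 0 else ∑' n2 : ℤ, J Δx (n1, n2) with hRdef
    have hSshmeas : ∀ Δx (n : ℤ × ℤ), Measurable fun ω : ℝ × ℝ =>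
        S (ω.1 - 2 * n.1 * π / Δx, ω.2 - 2 * n.2 * ρ) := fun Δx n =>
      hSmeas.comp ((measurable_fst.sub_const _).prodMk (measurable_snd.sub_const _))
    have hGnmeas : ∀ Δx n, Measurable (Gn Δx n) := fun Δx n =>
      (hSshmeas Δx n).mul ((hWmeas Δb).comp (measurable_fst.sub_const _))
    have hKbound : ∀ Δx, Δx ∈ Set.Ioo (0:ℝ) (π / ρ) → ∑' n : ℤ × ℤ, K Δx n ≤ 4 * I := by
      intro Δx hΔx
      have ha : 2 * ρ ≤ 2 * π / Δx := by
        have h1 : Δx * ρ < π := (lt_div_iff₀ hρ).mp hΔx.2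
        rw [le_div_iff₀ hΔx.1]
        nlinarith
      have := tile2 S hSmeas ρ (2 * π / Δx) (2 * ρ) hρ ha le_rfl
      refine le_trans (le_of_eq (tsum_congr fun n => ?_)) this
      apply lintegral_congr fun ω => ?_
      congr 2
      · push_cast; field_simp
      · push_cast; ring
    have hJleK : ∀ Δx n, J Δx n ≤ K Δx n := by
      intro Δx n
      apply setLIntegral_mono' hBmeas
      intro ω _
      exact le_trans (mul_le_mul_right (hWle1 _ _) _) (le_of_eq (mul_one _))
    have hJtot : ∀ Δx, Δx ∈ Set.Ioo (0:ℝ) (π / ρ) → ∑' n : ℤ × ℤ, J Δx n ≤ 4 * I :=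
      fun Δx hΔx => le_trans (ENNReal.tsum_le_tsum (hJleK Δx)) (hKbound Δx hΔx)
    have hsplit : ∀ Δx, ∑' n : ℤ × ℤ, J Δx n = (∑' n2 : ℤ, J Δx (0, n2)) + R Δx := by
      intro Δx
      rw [ENNReal.tsum_prod (f := fun n1 n2 => J Δx (n1, n2)), hRdef,
        ENNReal.tsum_eq_add_tsum_ite (f := fun n1 : ℤ => ∑' n2 : ℤ, J Δx (n1, n2)) 0]
      congr 1
      refine tsum_congr fun n1 => ?_
      congr
    have hzeroslice : ∀ Δx, (∑' n2 : ℤ, J Δx (0, n2)) = H0 Δb := by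
      intro Δx
      have he : ∀ n2 : ℤ, J Δx (0, n2) =
          ∫⁻ ω in B, S (ω.1, ω.2 - 2 * n2 * ρ) * W Δb ω.1 := by
        intro n2
        apply lintegral_congr fun ω => ?_
        rw [hGndef]
        norm_num
      rw [tsum_congr he,
        ← lintegral_tsum (f := fun (n2 : ℤ) (ω : ℝ × ℝ) =>
          S (ω.1, ω.2 - 2 * n2 * ρ) * W Δb ω.1)
          (fun n2 => ((hmeasT n2).mul ((hWmeas Δb).comp measurable_fst)).aemeasurable)]
      exact lintegral_congr fun ω => ENNReal.tsum_mul_right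
    have hRleTot : ∀ Δx, R Δx ≤ ∑' n : ℤ × ℤ, J Δx n := fun Δx =>
      le_trans le_add_self (le_of_eq (hsplit Δx).symm)
    have hRne : ∀ Δx, Δx ∈ Set.Ioo (0:ℝ) (π / ρ) → R Δx ≠ ⊤ := fun Δx hΔx =>
      ((hRleTot Δx).trans_lt ((hJtot Δx hΔx).trans_lt
        (ENNReal.mul_lt_top (by norm_num) hIlt))).ne
    have hRle : ∀ Δx, Δx ∈ Set.Ioo (0:ℝ) (π / ρ) →
        R Δx ≤ ENNReal.ofReal (Δx ^ 2 / (Δb ^ 2 * π ^ 2)) * (4 * I) := by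
      intro Δx hΔx
      set ε : ℝ := Δx ^ 2 / (Δb ^ 2 * π ^ 2) with hεdef
      have hΔx0 := hΔx.1
      have hρπ : ρ < π / Δx := by
        rw [lt_div_iff₀ hΔx0]
        have := (lt_div_iff₀ hρ).mp hΔx.2
        nlinarith
      have hW : ∀ n1 : ℤ, n1 ≠ 0 → ∀ ω ∈ B, W Δb (ω.1 - 2 * π * n1 / Δx) ≤
          ENNReal.ofReal ε := by
        intro n1 hn1 ω hω
        have hω1 : |ω.1| ≤ ρ := abs_le.mpr ⟨(Set.mem_prod.mp hω).1.1, (Set.mem_prod.mp hω).1.2⟩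
        set x : ℝ := ω.1 - 2 * π * n1 / Δx with hxdef
        have hn1' : (1:ℝ) ≤ |(n1:ℝ)| := by exact_mod_cast Int.one_le_abs hn1
        have hc : 2 * (π / Δx) ≤ |2 * π * (n1:ℝ) / Δx| := by
          rw [abs_div, abs_of_pos hΔx0, abs_mul, abs_mul, abs_of_pos hπ,
            (show |(2:ℝ)| = 2 by norm_num)]
          rw [show 2 * (π / Δx) = 2 * π * 1 / Δx by ring]
          gcongr
        have hxlb : π / Δx ≤ |x| := by
          have h1 : |2 * π * (n1:ℝ) / Δx| - |ω.1| ≤ |x| := by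
            have h5 := abs_sub_abs_le_abs_sub (2 * π * (n1:ℝ) / Δx) ω.1
            rw [hxdef, abs_sub_comm]
            linarith
          linarith
        have hx0 : x ≠ 0 := by
          intro h
          rw [h, abs_zero] at hxlb
          have h6 : 0 < π / Δx := by positivity
          linarith
        have hsle : _root_.sinc ((Δb / π) * x) ^ 2 ≤ ε := by
          have harg : (Δb / π) * x ≠ 0 :=
            mul_ne_zero (div_ne_zero (ne_of_gt hΔb) (ne_of_gt hπ)) hx0
          have h1 := sinc_sq_le _ harg
          have h2 : π * ((Δb / π) * x) = Δb * x := by field_simp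
          rw [h2] at h1
          have h3 : (π / Δx) ^ 2 ≤ x ^ 2 := by
            rw [← sq_abs x]
            apply pow_le_pow_left₀ (by positivity) hxlb
          have h4 : (0:ℝ) < Δb ^ 2 * (π / Δx) ^ 2 := by positivity
          calc _root_.sinc ((Δb / π) * x) ^ 2 ≤ 1 / (Δb * x) ^ 2 := h1
            _ = 1 / (Δb ^ 2 * x ^ 2) := by ring_nf
            _ ≤ 1 / (Δb ^ 2 * (π / Δx) ^ 2) := by
                apply one_div_le_one_div_of_le h4
                nlinarith [sq_nonneg Δb]
            _ = ε := by rw [hεdef]; field_simp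
        exact ENNReal.ofReal_le_ofReal hsle
      have hterm : ∀ n1 : ℤ, (if n1 = 0 then 0 else ∑' n2 : ℤ, J Δx (n1, n2)) ≤
          ENNReal.ofReal ε * ∑' n2 : ℤ, K Δx (n1, n2) := by
        intro n1
        rcases eq_or_ne n1 0 with rfl | hn1
        · simp
        · rw [if_neg hn1]
          calc ∑' n2 : ℤ, J Δx (n1, n2)
              ≤ ∑' n2 : ℤ, ENNReal.ofReal ε * K Δx (n1, n2) := by
                apply ENNReal.tsum_le_tsum
                intro n2
                rw [hJdef, hKdef]
                simp only
                rw [← lintegral_const_mul _ (hSshmeas Δx (n1, n2))]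
                apply setLIntegral_mono' hBmeas
                intro ω hω
                rw [mul_comm (ENNReal.ofReal ε)]
                exact mul_le_mul_right (hW n1 hn1 ω hω) _
            _ = ENNReal.ofReal ε * ∑' n2 : ℤ, K Δx (n1, n2) := ENNReal.tsum_mul_left
      calc R Δx ≤ ∑' n1 : ℤ, ENNReal.ofReal ε * ∑' n2 : ℤ, K Δx (n1, n2) :=
            ENNReal.tsum_le_tsum hterm
        _ = ENNReal.ofReal ε * ∑' n1 : ℤ, ∑' n2 : ℤ, K Δx (n1, n2) := ENNReal.tsum_mul_left
        _ = ENNReal.ofReal ε * ∑' n : ℤ × ℤ, K Δx n := by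
            rw [ENNReal.tsum_prod (f := fun n1 n2 => K Δx (n1, n2))]
        _ ≤ ENNReal.ofReal ε * (4 * I) := mul_le_mul_right (hKbound Δx hΔx) _
    have hFeq : ∀ Δx, Δx ∈ Set.Ioo (0:ℝ) (π / ρ) →
        (∫ ω in B, ∑' n : ℤ × ℤ,
            Sν (ω.1 - 2 * n.1 * π / Δx, ω.2 - 2 * n.2 * ρ) *
              (_root_.sinc ((Δb / π) * (ω.1 - 2 * π * n.1 / Δx))) ^ 2) =
          (H0 Δb).toReal + (R Δx).toReal := by
      intro Δx hΔx
      have hfin : ∑' n : ℤ × ℤ, J Δx n ≠ ⊤ :=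
        ((hJtot Δx hΔx).trans_lt (ENNReal.mul_lt_top (by norm_num) hIlt)).ne
      have hinteq : (∫ ω in B, ∑' n : ℤ × ℤ,
            Sν (ω.1 - 2 * n.1 * π / Δx, ω.2 - 2 * n.2 * ρ) *
              (_root_.sinc ((Δb / π) * (ω.1 - 2 * π * n.1 / Δx))) ^ 2) =
          (∫⁻ ω in B, ∑' n : ℤ × ℤ, Gn Δx n ω).toReal := by
        refine integral_tsum_eq_toReal (ι := ℤ × ℤ) B
          (fun n ω => Sν (ω.1 - 2 * n.1 * π / Δx, ω.2 - 2 * n.2 * ρ) *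
            (_root_.sinc ((Δb / π) * (ω.1 - 2 * π * n.1 / Δx))) ^ 2)
          (Gn Δx) ?_ (hGnmeas Δx)
          (fun n ω => ENNReal.mul_ne_top ENNReal.ofReal_ne_top ENNReal.ofReal_ne_top) hfin
        apply ae_restrict_of_ae
        rw [ae_all_iff]
        intro n
        filter_upwards [haeShift ((2 * n.1 * π / Δx : ℝ), (2 * n.2 * ρ : ℝ))] with ω h
        refine ⟨?_, mul_nonneg (hnonneg _) (sq_nonneg _)⟩
        have h2 : (ω - ((2 * n.1 * π / Δx : ℝ), (2 * n.2 * ρ : ℝ))) =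
            (ω.1 - 2 * n.1 * π / Δx, ω.2 - 2 * n.2 * ρ) := rfl
        have h3 : Sν (ω.1 - 2 * n.1 * π / Δx, ω.2 - 2 * n.2 * ρ) =
            g (ω.1 - 2 * n.1 * π / Δx, ω.2 - 2 * n.2 * ρ) := by rw [← h2]; exact h
        rw [h3, ENNReal.ofReal_mul (hg0 _)]
      rw [hinteq, lintegral_tsum (fun n => (hGnmeas Δx n).aemeasurable),
        hsplit Δx, hzeroslice Δx, ENNReal.toReal_add (hH0ne Δb) (hRne Δx hΔx)]
    have hmem : Set.Ioo (0:ℝ) (π / ρ) ∈ 𝓝[>] (0:ℝ) :=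
      Ioo_mem_nhdsGT_of_mem ⟨le_refl 0, by positivity⟩
    have hRtend : Tendsto (fun Δx => cb * (R Δx).toReal) (𝓝[>] (0:ℝ)) (𝓝 0) := by
      apply squeeze_zero' (Eventually.of_forall fun Δx => by positivity)
      · filter_upwards [hmem] with Δx hΔx
        have h4I : (4 * I) ≠ ⊤ := (ENNReal.mul_lt_top (by norm_num) hIlt).ne
        have h1 : (R Δx).toReal ≤ Δx ^ 2 / (Δb ^ 2 * π ^ 2) * (4 * I).toReal := by
          have h7 := ENNReal.toReal_mono (ENNReal.mul_ne_top ENNReal.ofReal_ne_top h4I)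
            (hRle Δx hΔx)
          rwa [ENNReal.toReal_mul, ENNReal.toReal_ofReal (by positivity)] at h7
        exact mul_le_mul_of_nonneg_left h1 hcb0
      · have h8 : Tendsto (fun Δx : ℝ => cb * (Δx ^ 2 / (Δb ^ 2 * π ^ 2) * (4 * I).toReal))
            (𝓝 0) (𝓝 (cb * ((0:ℝ) ^ 2 / (Δb ^ 2 * π ^ 2) * (4 * I).toReal))) := by
          exact (continuous_const.mul
            (((continuous_pow 2).div_const _).mul continuous_const)).tendsto 0
        have h0 : cb * ((0:ℝ) ^ 2 / (Δb ^ 2 * π ^ 2) * (4 * I).toReal) = 0 := by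
          norm_num
        rw [h0] at h8
        exact h8.mono_left nhdsWithin_le_nhds
    have hmain : Tendsto (fun Δx => cb * ((H0 Δb).toReal + (R Δx).toReal))
        (𝓝[>] (0:ℝ)) (𝓝 (cb * (H0 Δb).toReal)) := by
      have h9 := (tendsto_const_nhds (x := cb * (H0 Δb).toReal)
        (f := 𝓝[>] (0:ℝ))).add hRtend
      rw [add_zero] at h9
      apply h9.congr
      intro Δx
      ring
    apply hmain.congr'
    filter_upwards [hmem] with Δx hΔx
    rw [hFeq Δx hΔx]
  · -- outer limit in Δb
    rw [htarget]
    have hc' : Tendsto (fun Δb => κ Δb ^ 2 * Δb ^ 2 / (4 * π ^ 4)) (𝓝[>] (0:ℝ))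
        (𝓝 (1 / (4 * π ^ 2))) := by
      have hQl := Q_tendsto ρ hρ
      have hden : Tendsto (fun Δb => 2 * π ^ 2 * ∫ ω in (-ρ)..ρ, _root_.sinc (Δb * ω / π) ^ 2)
          (𝓝[>] (0:ℝ)) (𝓝 (2 * π ^ 2 * (2 * ρ))) := hQl.const_mul _
      have hlim : Tendsto (fun Δb => ρ / (2 * π ^ 2 * ∫ ω in (-ρ)..ρ, _root_.sinc (Δb * ω / π) ^ 2))
          (𝓝[>] (0:ℝ)) (𝓝 (ρ / (2 * π ^ 2 * (2 * ρ)))) :=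
        tendsto_const_nhds.div hden (by positivity)
      have hval : ρ / (2 * π ^ 2 * (2 * ρ)) = 1 / (4 * π ^ 2) := by
        field_simp
        ring
      rw [hval] at hlim
      apply hlim.congr'
      filter_upwards [self_mem_nhdsWithin] with Δb hΔb
      have hΔb' : (0:ℝ) < Δb := hΔb
      have hQ := Q_pos ρ hρ Δb hΔb'
      have hX : 0 < Δb ^ 2 / π ^ 2 * ∫ ω in (-ρ)..ρ, _root_.sinc (Δb * ω / π) ^ 2 := by positivity
      rw [hκ Δb hΔb']
      have hsq : (Real.sqrt (2 * ρ) *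
          ((Δb ^ 2 / π ^ 2 * ∫ ω in (-ρ)..ρ, _root_.sinc (Δb * ω / π) ^ 2) ^ (-(1/2:ℝ)))) ^ 2 =
          2 * ρ * (Δb ^ 2 / π ^ 2 * ∫ ω in (-ρ)..ρ, _root_.sinc (Δb * ω / π) ^ 2)⁻¹ := by
        rw [mul_pow, Real.sq_sqrt (by linarith)]
        congr 1
        rw [← Real.rpow_natCast
          ((Δb ^ 2 / π ^ 2 * ∫ ω in (-ρ)..ρ, _root_.sinc (Δb * ω / π) ^ 2) ^ (-(1/2:ℝ))) 2,
          ← Real.rpow_mul hX.le]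
        have hexp : (-(1/2:ℝ)) * ((2:ℕ):ℝ) = -1 := by push_cast; norm_num
        rw [hexp]
        exact Real.rpow_neg_one _
      rw [hsq]
      field_simp
      ring
    have hENN : Tendsto H0 (𝓝[>] (0:ℝ)) (𝓝 (∫⁻ ω in B, T ω)) := by
      rw [tendsto_iff_seq_tendsto]
      intro u hu
      have hu0 : Tendsto u atTop (𝓝 0) := hu.mono_right nhdsWithin_le_nhds
      have hcomp : (H0 ∘ u) = fun k => ∫⁻ ω in B, T ω * W (u k) ω.1 := rfl
      rw [hcomp]
      apply tendsto_lintegral_of_dominated_convergence (bound := T)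
      · exact fun k => hTmeas.mul ((hWmeas (u k)).comp measurable_fst)
      · intro k
        filter_upwards with ω
        exact le_trans (mul_le_mul_right (hWle1 _ _) _) (le_of_eq (mul_one _))
      · exact hTne
      · filter_upwards with ω
        have hcont : Continuous fun Δb : ℝ => W Δb ω.1 :=
          ENNReal.continuous_ofReal.comp
            ((_root_.continuous_sinc.comp ((continuous_id.div_const π).mul continuous_const)).pow 2)
        have hW0 : W 0 ω.1 = 1 := by
          rw [hWdef]
          norm_num [_root_.sinc_zero]
        have h1 : Tendsto (fun k => W (u k) ω.1) atTop (𝓝 1) := by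
          have h2 := (hcont.tendsto 0).comp hu0
          rw [hW0] at h2
          exact h2
        have h3 := ENNReal.Tendsto.const_mul (a := T ω) h1 (Or.inl one_ne_zero)
        rwa [mul_one] at h3
    have hH0tend : Tendsto (fun Δb => (H0 Δb).toReal) (𝓝[>] (0:ℝ))
        (𝓝 ((∫⁻ ω in B, T ω).toReal)) :=
      (ENNReal.tendsto_toReal hTne).comp hENN
    exact hc'.mul hH0tend
end

section
/- Let f(x,t) be bandlimited to the rectangle Ω = [−ρ_x, ρ_x] × [−ρ_t, ρ_t]. Sensors move at common speed v > 0 along trajectories x_j(t) = jΔ + vt, j ∈ ℤ, and take synchronized temporal samples so that all sample points lie on a two-dimensional lattice in the (x,t)-plane generated by the spatial shift (Δ, 0) and an appropriate temporal shift along the trajectory direction at the Nyquist rate (ρ_t + vρ_x)/π. If Δ < π·max{v/ρ_t, 1/ρ_x}, then the translates of Ω by the dual (reciprocal) lattice are pairwise disjoint, i.e., there is no aliasing and f is perfectly recoverable from the samples. -/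
open MeasureTheory Real

lemma mobile_key (ρx ρt v Δ : ℝ)
    (hρx : 0 < ρx) (hρt : 0 < ρt) (hv : 0 < v) (hΔ : 0 < Δ)
    (hspacing : Δ < π * max (v / ρt) (1 / ρx)) (m n : ℤ) (hmn : (m, n) ≠ (0, 0)) :
    2 * ρx ≤ |2 * π * (m : ℝ) / Δ| ∨
      2 * ρt ≤ |(-(2 * π * v * m / Δ) + 2 * (n : ℝ) * (ρt + v * ρx))| := by
  have hπ := Real.pi_pos
  have hS : (0:ℝ) < ρt + v * ρx := by positivity
  by_cases hm : m = 0
  · subst hm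
    have hn : n ≠ 0 := by simpa using hmn
    have hn1 : (1:ℝ) ≤ |(n:ℝ)| := by
      have := Int.one_le_abs hn
      calc (1:ℝ) ≤ |n| := by exact_mod_cast this
        _ = |(n:ℝ)| := by rw [Int.cast_abs]
    right
    have : |(-(2 * π * v * (0:ℤ) / Δ) + 2 * (n : ℝ) * (ρt + v * ρx))|
        = 2 * |(n:ℝ)| * (ρt + v * ρx) := by
      push_cast
      rw [show (-(2 * π * v * 0 / Δ) + 2 * (n : ℝ) * (ρt + v * ρx))
          = 2 * (n:ℝ) * (ρt + v * ρx) by ring, abs_mul, abs_mul,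
        abs_of_pos hS, abs_of_pos (by norm_num : (0:ℝ) < 2)]
    rw [this]
    nlinarith [mul_pos hv hρx]
  · have hm1 : (1:ℝ) ≤ |(m:ℝ)| := by
      have := Int.one_le_abs hm
      calc (1:ℝ) ≤ |m| := by exact_mod_cast this
        _ = |(m:ℝ)| := by rw [Int.cast_abs]
    have habsA : |2 * π * (m : ℝ) / Δ| = 2 * π * |(m:ℝ)| / Δ := by
      rw [abs_div, abs_of_pos hΔ, abs_mul, abs_of_pos (by positivity : (0:ℝ) < 2 * π)]
    have hAlb : 2 * π / Δ ≤ |2 * π * (m : ℝ) / Δ| := by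
      rw [habsA]
      rw [div_le_div_iff₀ hΔ hΔ]
      nlinarith [mul_nonneg (sub_nonneg.mpr hm1) (mul_pos hπ hΔ).le]
    rcases le_total (v / ρt) (1 / ρx) with hmax | hmax
    · -- Δ < π / ρx
      left
      have h1 : Δ < π * (1 / ρx) := by
        rwa [max_eq_right hmax] at hspacing
      rw [mul_one_div, lt_div_iff₀ hρx] at h1
      have : 2 * ρx < 2 * π / Δ := by
        rw [lt_div_iff₀ hΔ]
        nlinarith
      linarith
    · -- Δ < π * v / ρt
      have h1 : Δ < π * (v / ρt) := by
        rwa [max_eq_left hmax] at hspacing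
      have h1' : Δ * ρt < π * v := by
        have := mul_lt_mul_of_pos_right h1 hρt
        rwa [mul_assoc, div_mul_cancel₀ _ hρt.ne'] at this
      have h2 : 2 * ρt < 2 * π * v / Δ := by
        rw [lt_div_iff₀ hΔ]
        nlinarith
      by_cases hx : 2 * ρx ≤ |2 * π * (m : ℝ) / Δ|
      · exact Or.inl hx
      push_neg at hx
      right
      by_cases hn : n = 0
      · subst hn
        have : |(-(2 * π * v * (m:ℝ) / Δ) + 2 * ((0:ℤ) : ℝ) * (ρt + v * ρx))|
            = v * |2 * π * (m : ℝ) / Δ| := by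
          push_cast
          rw [show (-(2 * π * v * (m:ℝ) / Δ) + 2 * (0:ℝ) * (ρt + v * ρx))
              = -(v * (2 * π * (m:ℝ) / Δ)) by ring, abs_neg, abs_mul, abs_of_pos hv]
        rw [this]
        have hvA : v * (2 * π / Δ) ≤ v * |2 * π * (m : ℝ) / Δ| :=
          mul_le_mul_of_nonneg_left hAlb hv.le
        have hlt : 2 * ρt < v * |2 * π * (m : ℝ) / Δ| := by
          calc 2 * ρt < 2 * π * v / Δ := h2
            _ = v * (2 * π / Δ) := by ring
            _ ≤ v * |2 * π * (m : ℝ) / Δ| := hvA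
        exact hlt.le
      · have hn1 : (1:ℝ) ≤ |(n:ℝ)| := by
          have := Int.one_le_abs hn
          calc (1:ℝ) ≤ |n| := by exact_mod_cast this
            _ = |(n:ℝ)| := by rw [Int.cast_abs]
        have key : |2 * (n:ℝ) * (ρt + v * ρx)| - |2 * π * v * (m:ℝ) / Δ|
            ≤ |(-(2 * π * v * (m:ℝ) / Δ) + 2 * (n : ℝ) * (ρt + v * ρx))| := by
          have := abs_sub_abs_le_abs_sub (2 * (n:ℝ) * (ρt + v * ρx)) (2 * π * v * (m:ℝ) / Δ)
          calc |2 * (n:ℝ) * (ρt + v * ρx)| - |2 * π * v * (m:ℝ) / Δ|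
              ≤ |2 * (n:ℝ) * (ρt + v * ρx) - 2 * π * v * (m:ℝ) / Δ| := this
            _ = |(-(2 * π * v * (m:ℝ) / Δ) + 2 * (n : ℝ) * (ρt + v * ρx))| := by
                ring_nf
        have h3 : |2 * (n:ℝ) * (ρt + v * ρx)| = 2 * |(n:ℝ)| * (ρt + v * ρx) := by
          rw [abs_mul, abs_mul, abs_of_pos hS, abs_of_pos (by norm_num : (0:ℝ) < 2)]
        have h4 : |2 * π * v * (m:ℝ) / Δ| = v * |2 * π * (m:ℝ) / Δ| := by
          rw [show 2 * π * v * (m:ℝ) / Δ = v * (2 * π * (m:ℝ) / Δ) by ring,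
            abs_mul, abs_of_pos hv]
        have h5 : v * |2 * π * (m:ℝ) / Δ| < v * (2 * ρx) :=
          mul_lt_mul_of_pos_left hx hv
        have h6 : 2 * (ρt + v * ρx) ≤ 2 * |(n:ℝ)| * (ρt + v * ρx) := by nlinarith
        rw [h3, h4] at key
        nlinarith
  
/-- sampling a field bandlimited to `Ω = [−ρ_x,ρ_x]×[−ρ_t,ρ_t]` with mobile
sensors at spacing `Δ` moving at speed `v`, taking synchronized temporal samples at the
Nyquist rate `(ρ_t + vρ_x)/π` (temporal spacing `T = π/(ρ_t + vρ_x)` along trajectories):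
if `Δ < π·max{v/ρ_t, 1/ρ_x}`, the translates of `Ω` by the nonzero reciprocal-lattice
vectors `m·(2π/Δ, −2πv/Δ) + n·(0, 2π/T)` do not overlap `Ω` (in positive measure), i.e.
there is no aliasing. -/
theorem mobile_rectangular_no_aliasing (ρx ρt v Δ : ℝ)
    (hρx : 0 < ρx) (hρt : 0 < ρt) (hv : 0 < v) (hΔ : 0 < Δ)
    (hspacing : Δ < π * max (v / ρt) (1 / ρx)) :
    ∀ m n : ℤ, (m, n) ≠ (0, 0) →
      volume (((fun ω : ℝ × ℝ =>
          (ω.1 + 2 * π * m / Δ,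
           ω.2 + (-(2 * π * v * m / Δ) + 2 * π * n / (π / (ρt + v * ρx))))) ''
            (Set.Icc (-ρx) ρx ×ˢ Set.Icc (-ρt) ρt)) ∩
        (Set.Icc (-ρx) ρx ×ˢ Set.Icc (-ρt) ρt)) = 0 := by
  intro m n hmn
  have hπ := Real.pi_pos
  have hS : (0:ℝ) < ρt + v * ρx := by positivity
  set a : ℝ := 2 * π * m / Δ with ha
  set b : ℝ := -(2 * π * v * m / Δ) + 2 * π * n / (π / (ρt + v * ρx)) with hb
  have hb' : b = -(2 * π * v * m / Δ) + 2 * (n : ℝ) * (ρt + v * ρx) := by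
    rw [hb]
    congr 1
    field_simp
  have himg : (fun ω : ℝ × ℝ => (ω.1 + a, ω.2 + b)) ''
      (Set.Icc (-ρx) ρx ×ˢ Set.Icc (-ρt) ρt)
      = Set.Icc (-ρx + a) (ρx + a) ×ˢ Set.Icc (-ρt + b) (ρt + b) := by
    have h := Set.prod_image_image_eq (s := Set.Icc (-ρx) ρx) (t := Set.Icc (-ρt) ρt)
      (m₁ := fun x => x + a) (m₂ := fun x => x + b)
    rw [Set.image_add_const_Icc, Set.image_add_const_Icc] at h
    exact h.symm
  rw [himg, Set.prod_inter_prod, Measure.volume_eq_prod, Measure.prod_prod,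
    Set.Icc_inter_Icc, Set.Icc_inter_Icc, Real.volume_Icc, Real.volume_Icc]
  rcases mobile_key ρx ρt v Δ hρx hρt hv hΔ hspacing m n hmn with h | h
  · have h1 : min (ρx + a) ρx - max (-ρx + a) (-ρx) ≤ 0 := by
      rcases abs_cases a with ⟨heq, _⟩ | ⟨heq, _⟩ <;>
        [ (have := min_le_right (ρx + a) ρx;
           have := le_max_left (-ρx + a) (-ρx); linarith);
          (have := min_le_left (ρx + a) ρx;
           have := le_max_right (-ρx + a) (-ρx); linarith)]
    rw [ENNReal.ofReal_eq_zero.mpr h1, zero_mul]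
  · rw [← hb'] at h
    have h1 : min (ρt + b) ρt - max (-ρt + b) (-ρt) ≤ 0 := by
      rcases abs_cases b with ⟨heq, _⟩ | ⟨heq, _⟩ <;>
        [ (have := min_le_right (ρt + b) ρt;
           have := le_max_left (-ρt + b) (-ρt); linarith);
          (have := min_le_left (ρt + b) ρt;
           have := le_max_right (-ρt + b) (-ρt); linarith)]
    rw [ENNReal.ofReal_eq_zero.mpr h1, mul_zero]
end

section
/- Let Ω_wave = { (ω_x, ω_t) ∈ ℝ² : |ω_t| ≤ ρ_t and |ω_x| ≤ |ω_t|/c } be the far-field wave spectrum (a bowtie region) with ρ_x = ρ_t/c. Suppose sensors at spacing Δ move at speed v with 0 < v < c and sample on a lattice whose reciprocal lattice contains shifts (−2πn/Δ, (2πn/Δ)v) for n ∈ ℤ along the direction orthogonal to the trajectories. If Δ < (π/ρ_x)(1 + v/c), then the translates of Ω_wave by these shifts do not overlap Ω_wave (no aliasing). -/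
open MeasureTheory Real

lemma wave_key (c ρt v a x t : ℝ) (hc : 0 < c) (hv : 0 < v) (hvc : v < c)
    (ha : 0 < a) (hA : 2 * ρt < (c + v) * a)
    (h1 : |t| ≤ ρt) (h2 : c * |x| ≤ |t|)
    (h3 : |t + a * v| ≤ ρt) (h4 : c * |x - a| ≤ |t + a * v|) : False := by
  have hca : 0 < (c - v) * a := mul_pos (by linarith) ha
  have h5 : a ≤ |x| + |x - a| := by
    have := abs_sub x (x - a)
    have e : x - (x - a) = a := by ring
    rw [e, abs_of_pos ha] at this
    exact this
  have habs : c * a ≤ |t| + |t + a * v| := by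
    have h6 : c * a ≤ c * (|x| + |x - a|) := mul_le_mul_of_nonneg_left h5 hc.le
    rw [mul_add] at h6
    linarith
  have hav : 0 < a * v := mul_pos ha hv
  rcases abs_cases t with ⟨e1, f1⟩ | ⟨e1, f1⟩ <;>
  rcases abs_cases (t + a * v) with ⟨e3, f3⟩ | ⟨e3, f3⟩ <;>
  rw [e1] at h1 habs <;> rw [e3] at h3 habs <;>
  linarith [hca, hav]

/-- for the far-field (bowtie) wave spectrum
`Ω_wave = {(ω_x,ω_t) : |ω_t| ≤ ρ_t, |ω_x| ≤ |ω_t|/c}` with `ρ_x = ρ_t/c`, sampled by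
sensors at spacing `Δ` moving at speed `0 < v < c` with reciprocal-lattice shifts
`(−2πn/Δ, (2πn/Δ)v)`: if `Δ < (π/ρ_x)(1 + v/c)` then no translate of `Ω_wave` by a nonzero
such shift overlaps `Ω_wave` in positive measure (no aliasing). -/
theorem wave_field_mobile_no_aliasing (c ρt ρx v Δ : ℝ)
    (hc : 0 < c) (hρt : 0 < ρt) (hρx : ρx = ρt / c)
    (hv : 0 < v) (hvc : v < c) (hΔ : 0 < Δ)
    (hspacing : Δ < (π / ρx) * (1 + v / c)) :
    ∀ n : ℤ, n ≠ 0 →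
      volume (((fun ω : ℝ × ℝ => (ω.1 - 2 * π * n / Δ, ω.2 + (2 * π * n / Δ) * v)) ''
          {ω : ℝ × ℝ | |ω.2| ≤ ρt ∧ |ω.1| ≤ |ω.2| / c}) ∩
        {ω : ℝ × ℝ | |ω.2| ≤ ρt ∧ |ω.1| ≤ |ω.2| / c}) = 0 := by
  intro n hn
  suffices hemp : (((fun ω : ℝ × ℝ => (ω.1 - 2 * π * n / Δ, ω.2 + (2 * π * n / Δ) * v)) ''
          {ω : ℝ × ℝ | |ω.2| ≤ ρt ∧ |ω.1| ≤ |ω.2| / c}) ∩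
        {ω : ℝ × ℝ | |ω.2| ≤ ρt ∧ |ω.1| ≤ |ω.2| / c}) = (∅ : Set (ℝ × ℝ)) by
    rw [hemp]; exact measure_empty
  rw [Set.eq_empty_iff_forall_notMem]
  rintro ω ⟨⟨⟨x, t⟩, ⟨h1, h2⟩, heq⟩, h3, h4⟩
  subst heq
  set a : ℝ := 2 * π * n / Δ with ha_def
  simp only at h1 h2 h3 h4
  have hπ : (0:ℝ) < π := Real.pi_pos
  have hcv : (0:ℝ) < c + v := by linarith
  have h2' : c * |x| ≤ |t| := by
    rw [le_div_iff₀ hc] at h2; linarith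
  have h4' : c * |x - a| ≤ |t + a * v| := by
    rw [le_div_iff₀ hc] at h4; linarith
  have hkey : 2 * ρt < (c + v) * (2 * π / Δ) := by
    rw [hρx] at hspacing
    have e : (π / (ρt / c)) * (1 + v / c) = π * (c + v) / ρt := by
      field_simp
    rw [e] at hspacing
    have h5 : Δ * ρt < π * (c + v) := (lt_div_iff₀ hρt).mp hspacing
    rw [show (c + v) * (2 * π / Δ) = ((c + v) * (2 * π)) / Δ by ring, lt_div_iff₀ hΔ]
    nlinarith
  rcases lt_or_gt_of_ne hn with hneg | hpos
  · -- n ≤ -1, use -a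
    have hn' : n ≤ -1 := by omega
    have hn1 : (n : ℝ) ≤ -1 := by exact_mod_cast hn'
    have haneg : 2 * π / Δ ≤ -a := by
      have e2 : -a = 2 * π * (-(n:ℝ)) / Δ := by rw [ha_def]; ring
      rw [e2, div_le_div_iff₀ hΔ hΔ]
      nlinarith [mul_pos hπ hΔ]
    have ha' : 0 < -a := lt_of_lt_of_le (by positivity) haneg
    have hA' : 2 * ρt < (c + v) * (-a) := by
      nlinarith [mul_le_mul_of_nonneg_left haneg hcv.le]
    refine wave_key c ρt v (-a) (-x) (-t) hc hv hvc ha' hA' (by rwa [abs_neg]) ?_ ?_ ?_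
    · rwa [abs_neg, abs_neg]
    · have e3 : -t + -a * v = -(t + a * v) := by ring
      rw [e3, abs_neg]; exact h3
    · have e4 : -x - -a = -(x - a) := by ring
      have e3 : -t + -a * v = -(t + a * v) := by ring
      rw [e4, e3, abs_neg, abs_neg]; exact h4'
  · have hn1 : (1:ℝ) ≤ (n : ℝ) := by exact_mod_cast hpos
    have hapos : 2 * π / Δ ≤ a := by
      rw [ha_def, div_le_div_iff₀ hΔ hΔ]
      nlinarith [mul_pos hπ hΔ]
    have ha' : 0 < a := lt_of_lt_of_le (by positivity) hapos
    have hA' : 2 * ρt < (c + v) * a := by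
      nlinarith [mul_le_mul_of_nonneg_left hapos hcv.le]
    exact wave_key c ρt v a x t hc hv hvc ha' hA' h1 h2' h3 h4'
end

section
/- For the wave-field setup, mobile sampling at speed v < c increases the maximum alias-free inter-sensor spacing over static sampling by exactly the factor (1 + v/c): static sampling requires Δ < π/ρ_x while mobile sampling permits Δ < (π/ρ_x)(1 + v/c). -/
open MeasureTheory Real

theorem mobile_aux_wave (c v ρt s t : ℝ) (hc : 0 < c) (hv : 0 < v) (hvc : v < c)
    (ht : |t| ≤ ρt) (hw : |t + s * v| ≤ ρt) (hk : |s| * c ≤ |t| + |t + s * v|)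
    (hb : 2 * ρt < |s| * (c + v)) : False := by
  rcases abs_cases s with ⟨e1, p1⟩ | ⟨e1, p1⟩ <;>
  rcases abs_cases t with ⟨e2, p2⟩ | ⟨e2, p2⟩ <;>
  rcases abs_cases (t + s * v) with ⟨e3, p3⟩ | ⟨e3, p3⟩ <;>
  rw [e1] at hk hb <;> rw [e2] at ht hk <;> rw [e3] at hw hk <;>
  nlinarith [mul_pos hv hv, sq_nonneg s, sq_nonneg (s*v)]

/-- for the wave-field setup, static sampling is alias-free for
`Δ < π/ρ_x`, mobile sampling at speed `v < c` is alias-free for `Δ < (π/ρ_x)(1 + v/c)`,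
and the ratio of the two spacing bounds equals `1 + v/c`. -/
theorem wave_field_spacing_improvement (c ρt ρx v : ℝ)
    (hc : 0 < c) (hρt : 0 < ρt) (hρx : ρx = ρt / c) (hv : 0 < v) (hvc : v < c) :
    (∀ Δ : ℝ, 0 < Δ → Δ < π / ρx →
      ∀ n : ℤ, n ≠ 0 →
        volume (((fun ω : ℝ × ℝ => (ω.1 - 2 * π * n / Δ, ω.2)) ''
            {ω : ℝ × ℝ | |ω.2| ≤ ρt ∧ |ω.1| ≤ |ω.2| / c}) ∩
          {ω : ℝ × ℝ | |ω.2| ≤ ρt ∧ |ω.1| ≤ |ω.2| / c}) = 0)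
    ∧ (∀ Δ : ℝ, 0 < Δ → Δ < (π / ρx) * (1 + v / c) →
      ∀ n : ℤ, n ≠ 0 →
        volume (((fun ω : ℝ × ℝ => (ω.1 - 2 * π * n / Δ, ω.2 + (2 * π * n / Δ) * v)) ''
            {ω : ℝ × ℝ | |ω.2| ≤ ρt ∧ |ω.1| ≤ |ω.2| / c}) ∩
          {ω : ℝ × ℝ | |ω.2| ≤ ρt ∧ |ω.1| ≤ |ω.2| / c}) = 0)
    ∧ ((π / ρx) * (1 + v / c)) / (π / ρx) = 1 + v / c := by
  have hπ : 0 < π := Real.pi_pos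
  have hρx0 : 0 < ρx := by rw [hρx]; positivity
  refine ⟨?_, ?_, ?_⟩
  · -- static sampling
    intro Δ hΔ hΔ2 n hn
    have hΔ2' : Δ * ρt < π * c := by
      have h1 : π / ρx = π * c / ρt := by rw [hρx]; field_simp
      rw [h1, lt_div_iff₀ hρt] at hΔ2
      linarith
    have hS : (((fun ω : ℝ × ℝ => (ω.1 - 2 * π * n / Δ, ω.2)) ''
            {ω : ℝ × ℝ | |ω.2| ≤ ρt ∧ |ω.1| ≤ |ω.2| / c}) ∩
          {ω : ℝ × ℝ | |ω.2| ≤ ρt ∧ |ω.1| ≤ |ω.2| / c}) = ∅ := by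
      rw [Set.eq_empty_iff_forall_notMem]
      rintro ⟨w1, w2⟩ ⟨⟨⟨x, t⟩, ⟨ht, hx⟩, heq⟩, hw2, hw1⟩
      simp only [Prod.mk.injEq] at heq
      obtain ⟨h1, h2⟩ := heq
      simp only [Set.mem_setOf_eq] at ht hx hw2 hw1
      have hn1 : (1 : ℝ) ≤ |(n : ℝ)| := by exact_mod_cast Int.one_le_abs hn
      have habs : |2 * π * (n : ℝ) / Δ| = 2 * π * |(n : ℝ)| / Δ := by
        rw [abs_div, abs_of_pos hΔ, abs_mul, abs_of_pos (by positivity : (0:ℝ) < 2 * π)]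
      have hs : 2 * π / Δ ≤ |2 * π * (n : ℝ) / Δ| := by
        rw [habs]
        exact (div_le_div_iff_of_pos_right hΔ).mpr (by nlinarith)
      have hs2 : 2 * ρt / c < 2 * π / Δ := by
        rw [div_lt_div_iff₀ hc hΔ]; nlinarith
      have hsub : |2 * π * (n : ℝ) / Δ| = |x - w1| := by rw [← h1]; ring_nf
      have htri : |x - w1| ≤ |x| + |w1| := abs_sub x w1
      have hx' : |x| * c ≤ |t| := (le_div_iff₀ hc).mp hx
      have hw1' : |w1| * c ≤ |w2| := (le_div_iff₀ hc).mp hw1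
      have hbig : 2 * ρt < |x - w1| * c := by
        have h := lt_of_lt_of_le hs2 (hsub ▸ hs)
        exact (div_lt_iff₀ hc).mp h
      have htri' : |x - w1| * c ≤ |x| * c + |w1| * c := by nlinarith
      rw [h2] at hx'
      linarith
    rw [hS]; exact measure_empty
  · -- mobile sampling
    intro Δ hΔ hΔ2 n hn
    have hΔ2' : Δ * ρt < π * (c + v) := by
      have h1 : (π / ρx) * (1 + v / c) = π * (c + v) / ρt := by
        rw [hρx]; field_simp
      rw [h1, lt_div_iff₀ hρt] at hΔ2
      linarith
    have hS : (((fun ω : ℝ × ℝ => (ω.1 - 2 * π * n / Δ, ω.2 + (2 * π * n / Δ) * v)) ''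
            {ω : ℝ × ℝ | |ω.2| ≤ ρt ∧ |ω.1| ≤ |ω.2| / c}) ∩
          {ω : ℝ × ℝ | |ω.2| ≤ ρt ∧ |ω.1| ≤ |ω.2| / c}) = ∅ := by
      rw [Set.eq_empty_iff_forall_notMem]
      rintro ⟨w1, w2⟩ ⟨⟨⟨x, t⟩, ⟨ht, hx⟩, heq⟩, hw2, hw1⟩
      simp only [Prod.mk.injEq] at heq
      obtain ⟨h1, h2⟩ := heq
      simp only [Set.mem_setOf_eq] at ht hx hw2 hw1
      have hn1 : (1 : ℝ) ≤ |(n : ℝ)| := by exact_mod_cast Int.one_le_abs hn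
      have habs : |2 * π * (n : ℝ) / Δ| = 2 * π * |(n : ℝ)| / Δ := by
        rw [abs_div, abs_of_pos hΔ, abs_mul, abs_of_pos (by positivity : (0:ℝ) < 2 * π)]
      have hs : 2 * π / Δ ≤ |2 * π * (n : ℝ) / Δ| := by
        rw [habs]
        exact (div_le_div_iff_of_pos_right hΔ).mpr (by nlinarith)
      have hs2 : 2 * ρt / (c + v) < 2 * π / Δ := by
        rw [div_lt_div_iff₀ (by linarith) hΔ]; nlinarith
      have hbig : 2 * ρt < |2 * π * (n : ℝ) / Δ| * (c + v) :=
        (div_lt_iff₀ (by linarith)).mp (lt_of_lt_of_le hs2 hs)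
      have hx' : |x| * c ≤ |t| := (le_div_iff₀ hc).mp hx
      have hw1' : |w1| * c ≤ |w2| := (le_div_iff₀ hc).mp hw1
      have hsub : |2 * π * (n : ℝ) / Δ| = |x - w1| := by rw [← h1]; ring_nf
      have htri : |x - w1| ≤ |x| + |w1| := abs_sub x w1
      have hkey : |2 * π * (n : ℝ) / Δ| * c ≤ |t| + |w2| := by
        rw [hsub]; nlinarith
      rw [← h2] at hw2 hkey
      rw [hsub] at hbig
      rw [hsub] at hkey
      have hseq : x - w1 = 2 * π * (n : ℝ) / Δ := by rw [← h1]; ring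
      rw [hseq] at hbig hkey
      exact mobile_aux_wave c v ρt (2 * π * (n : ℝ) / Δ) t hc hv hvc ht hw2 hkey hbig
    rw [hS]; exact measure_empty
  · exact mul_div_cancel_left₀ _ (by positivity)
end
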